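/- arXiv:1212.5123 — 8 statements merged into one kernel-verified Lean document; each statement's English description precedes it below -/
import Mathlib

section
/- Let f₁ ⊣ g₁ (f₁ : A ⥤ B, unit η₁) and f₂ ⊣ g₂ (f₂ : C ⥤ D, unit η₂) be l-reflections of categories, and let r : A ⥤ C, s : B ⥤ D be functors with f₁ ⋙ s = r ⋙ f₂. Then (r, s) is a morphism of l-reflections if and only if the mate of the square (r, s) is an identity natural transformation (in particular g₁ ⋙ r = s ⋙ g₂). The same equivalence holds for p-reflections. -/
open CategoryTheory

universe v₁ v₂ v₃ v₄ u₁ u₂ u₃ u₄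

/-- `(r, s)` is a morphism of (l- or p-)reflections iff the mate of the square is an
identity natural transformation. -/
theorem morphism_of_reflections_iff_mate_eq_id
    {A : Type u₁} [Category.{v₁} A] {B : Type u₂} [Category.{v₂} B]
    {C : Type u₃} [Category.{v₃} C] {D : Type u₄} [Category.{v₄} D]
    {f₁ : A ⥤ B} {g₁ : B ⥤ A} {f₂ : C ⥤ D} {g₂ : D ⥤ C}
    (adj₁ : f₁ ⊣ g₁) (adj₂ : f₂ ⊣ g₂)
    -- `adj₁` and `adj₂` are l-reflections: their counits are identities
    (hc₁ : g₁ ⋙ f₁ = 𝟭 B) (hc₁' : adj₁.counit = eqToHom hc₁)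
    (hc₂ : g₂ ⋙ f₂ = 𝟭 D) (hc₂' : adj₂.counit = eqToHom hc₂)
    -- a tight commuting square `(r, s) : f₁ → f₂`
    (r : A ⥤ C) (s : B ⥤ D) (hsq : f₁ ⋙ s = r ⋙ f₂) :
    -- `(r, s)` is a morphism of reflections ...
    (∃ h : g₁ ⋙ r = s ⋙ g₂,
        Functor.whiskerRight adj₁.unit r ≫
            eqToHom (show (f₁ ⋙ g₁) ⋙ r = r ⋙ (f₂ ⋙ g₂) by
              rw [Functor.assoc, h, ← Functor.assoc, hsq, Functor.assoc]) =
          Functor.whiskerLeft r adj₂.unit) ↔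
    -- ... iff the mate of the square is an identity natural transformation
    (∃ h : g₁ ⋙ r = s ⋙ g₂,
        Functor.whiskerLeft (g₁ ⋙ r) adj₂.unit ≫
            eqToHom (show (g₁ ⋙ r) ⋙ (f₂ ⋙ g₂) = s ⋙ g₂ by
              rw [show (g₁ ⋙ r) ⋙ f₂ ⋙ g₂ = (g₁ ⋙ (r ⋙ f₂)) ⋙ g₂ from rfl, ← hsq,
                show (g₁ ⋙ (f₁ ⋙ s)) ⋙ g₂ = (g₁ ⋙ f₁) ⋙ (s ⋙ g₂) from rfl, hc₁,
                Functor.id_comp]) =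
          eqToHom h) := by
  have key₁ : ∀ b : B, adj₁.unit.app (g₁.obj b) =
      eqToHom (congrArg g₁.obj (Functor.congr_obj hc₁ b).symm) := by
    intro b
    have := adj₁.right_triangle_components b
    rw [hc₁', eqToHom_app, eqToHom_map, comp_eqToHom_iff] at this
    simpa using this
  have key₂ : ∀ a : A, f₁.map (adj₁.unit.app a) =
      eqToHom (Functor.congr_obj hc₁ (f₁.obj a)).symm := by
    intro a
    have := adj₁.left_triangle_components a
    rw [hc₁', eqToHom_app, comp_eqToHom_iff] at this
    simpa using this
  constructor
  · rintro ⟨h, hw⟩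
    refine ⟨h, ?_⟩
    ext b
    have hb := NatTrans.congr_app hw (g₁.obj b)
    simp only [NatTrans.comp_app, Functor.whiskerRight_app, Functor.whiskerLeft_app, eqToHom_app,
      Functor.comp_obj] at hb ⊢
    rw [← hb, key₁ b, eqToHom_map, eqToHom_trans, eqToHom_trans]
  · rintro ⟨h, hw⟩
    refine ⟨h, ?_⟩
    ext a
    have ha := NatTrans.congr_app hw (f₁.obj a)
    simp only [NatTrans.comp_app, Functor.whiskerLeft_app, eqToHom_app, comp_eqToHom_iff,
      Functor.comp_obj] at ha
    have e : f₂.obj (r.obj a) = f₂.obj (r.obj (g₁.obj (f₁.obj a))) := by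
      rw [← Functor.comp_obj r f₂, ← Functor.comp_obj r f₂, ← hsq]
      simp only [Functor.comp_obj]
      exact congrArg s.obj (Functor.congr_obj hc₁ (f₁.obj a)).symm
    have hm : f₂.map (r.map (adj₁.unit.app a)) = eqToHom e := by
      have hh := Functor.congr_hom hsq.symm (adj₁.unit.app a)
      rw [Functor.comp_map, Functor.comp_map, key₂, eqToHom_map] at hh
      rw [hh]
      simp
    have hmap : (f₂ ⋙ g₂).map (r.map (adj₁.unit.app a)) =
        eqToHom (congrArg g₂.obj e) := by
      rw [Functor.comp_map, hm, eqToHom_map]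
    have nat := adj₂.unit.naturality (r.map (adj₁.unit.app a))
    simp only [NatTrans.comp_app, Functor.whiskerRight_app, Functor.whiskerLeft_app, eqToHom_app,
      Functor.comp_obj, Functor.id_map, Functor.id_obj] at nat ⊢
    rw [ha, hmap, eq_comm, comp_eqToHom_iff] at nat
    rw [nat]
    simp
end

section
/- Let f : A ⥤ B be a functor and let P_f be the full subcategory of the comma category B/f spanned by the objects (x, a, α) with α an isomorphism; let p : P_f ⥤ A and q : P_f ⥤ B be the restricted projections and λ : q ⟶ p ⋙ f the restricted canonical transformation (a natural isomorphism). The functor r_f : A ⥤ P_f, a ↦ (f a, a, 𝟙_{f a}), satisfies r_f ⋙ p = 𝟭 A and r_f ⋙ q = f, and there is an adjunction p ⊣ r_f whose counit is the identity and whose unit is a natural isomorphism (so p ⊣ r_f is a p-reflection and in particular an adjoint equivalence); the unit η is the unique natural transformation 𝟭_{P_f} ⟶ p ⋙ r_f with whiskerRight η p = 𝟙 and whiskerRight η q = λ. -/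
open CategoryTheory

universe v₁ v₂ u₁ u₂

variable {A : Type u₁} [Category.{v₁} A] {B : Type u₂} [Category.{v₂} B]

/-- The pseudolimit `P_f` of the arrow `f`: the full subcategory of the comma
category `B/f` spanned by the objects whose structure morphism is invertible. -/
abbrev PseudoLimitArrow (f : A ⥤ B) : Type max u₁ u₂ v₂ :=
  ObjectProperty.FullSubcategory (fun X : Comma (𝟭 B) f => IsIso X.hom)

/-- The restricted projection `p : P_f ⥤ A`. -/
def pProj (f : A ⥤ B) : PseudoLimitArrow f ⥤ A :=
  ObjectProperty.ι _ ⋙ Comma.snd (𝟭 B) f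

/-- The restricted projection `q : P_f ⥤ B`. -/
def qProj (f : A ⥤ B) : PseudoLimitArrow f ⥤ B :=
  ObjectProperty.ι _ ⋙ Comma.fst (𝟭 B) f

/-- The restricted canonical transformation `λ : q ⟶ p ⋙ f`. -/
def lamProj (f : A ⥤ B) : qProj f ⟶ pProj f ⋙ f :=
  Functor.whiskerLeft (ObjectProperty.ι _) (Comma.natTrans (𝟭 B) f)

/-- The canonical functor `r_f : A ⥤ P_f`, `a ↦ (f a, a, 𝟙 (f a))`. -/
@[simps]
def rPFunctor (f : A ⥤ B) : A ⥤ PseudoLimitArrow f where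
  obj a := ⟨{ left := f.obj a, right := a, hom := 𝟙 (f.obj a) }, by dsimp; infer_instance⟩
  map s := ObjectProperty.homMk { left := f.map s, right := s, w := by simp }

/-- The unit of the adjunction `p ⊣ r_f`. -/
@[simps]
def pUnit (f : A ⥤ B) : 𝟭 (PseudoLimitArrow f) ⟶ pProj f ⋙ rPFunctor f where
  app X := ObjectProperty.homMk { left := X.obj.hom, right := 𝟙 _, w := by show X.obj.hom ≫ 𝟙 _ = X.obj.hom ≫ f.map (𝟙 _); simp }
  naturality X Y g := by
    ext1
    apply CommaMorphism.ext
    · exact g.hom.w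
    · show g.hom.right ≫ 𝟙 _ = 𝟙 _ ≫ g.hom.right; simp

instance pUnitAppIso (f : A ⥤ B) (X : PseudoLimitArrow f) : IsIso ((pUnit f).app X) := by
  have : IsIso X.obj.hom := X.property
  exact ⟨⟨ObjectProperty.homMk { left := @inv _ _ _ _ X.obj.hom this, right := 𝟙 _, w := by show inv X.obj.hom ≫ X.obj.hom = 𝟙 _ ≫ f.map (𝟙 _); simp },
    by
      constructor <;> ext1 <;> apply CommaMorphism.ext
      · show X.obj.hom ≫ inv X.obj.hom = 𝟙 _; simp
      · show 𝟙 _ ≫ 𝟙 _ = 𝟙 _; simp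
      · show inv X.obj.hom ≫ X.obj.hom = 𝟙 _; simp
      · show 𝟙 _ ≫ 𝟙 _ = 𝟙 _; simp⟩⟩

instance (f : A ⥤ B) : IsIso (pUnit f) := NatIso.isIso_of_isIso_app _

/-- The adjunction `p ⊣ r_f`. -/
def pAdj (f : A ⥤ B) : pProj f ⊣ rPFunctor f :=
  Adjunction.mkOfUnitCounit
    { unit := pUnit f
      counit := eqToHom (rfl : rPFunctor f ⋙ pProj f = 𝟭 A)
      left_triangle := by ext X; simp [pProj]; exact Category.comp_id (𝟙 _)
      right_triangle := by
        ext a : 2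
        simp only [eqToHom_refl, NatTrans.comp_app, Functor.whiskerLeft_app, Functor.associator_inv_app,
          Functor.whiskerRight_app, NatTrans.id_app', Functor.map_id]
        ext1
        apply CommaMorphism.ext
        · show 𝟙 (f.obj a) ≫ 𝟙 _ ≫ f.map (𝟙 a) = 𝟙 _; simp
        · show 𝟙 a ≫ 𝟙 a ≫ 𝟙 a = 𝟙 a; simp }

/-- The projection `p : P_f ⥤ A` from the pseudolimit of the arrow `f` admits
`r_f` as a right adjoint, with identity counit and invertible unit: a
p-reflection, and in particular an adjoint equivalence. -/
theorem pseudolimit_p_reflection (f : A ⥤ B) :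
    rPFunctor f ⋙ pProj f = 𝟭 A ∧
    rPFunctor f ⋙ qProj f = f ∧
    ∃ adj : pProj f ⊣ rPFunctor f,
      adj.counit = eqToHom (show rPFunctor f ⋙ pProj f = 𝟭 A from rfl) ∧
      IsIso adj.unit ∧
      (pProj f).IsEquivalence ∧
      Functor.whiskerRight adj.unit (pProj f) = 𝟙 (pProj f) ∧
      Functor.whiskerRight adj.unit (qProj f) = lamProj f ∧
      ∀ η' : 𝟭 (PseudoLimitArrow f) ⟶ pProj f ⋙ rPFunctor f,
        Functor.whiskerRight η' (pProj f) = 𝟙 (pProj f) →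
        Functor.whiskerRight η' (qProj f) = lamProj f →
        η' = adj.unit := by
  refine ⟨rfl, rfl, pAdj f, ?_, ?_, ?_, ?_, ?_, ?_⟩
  · rfl
  · exact inferInstanceAs (IsIso (pUnit f))
  · have h1 : ∀ X, IsIso ((pAdj f).unit.app X) := fun X => pUnitAppIso f X
    have h2 : ∀ Y, IsIso ((pAdj f).counit.app Y) := by
      intro Y; show IsIso (𝟙 Y); infer_instance
    exact (pAdj f).toEquivalence.isEquivalence_functor
  · ext X; simp [pProj, pAdj]; rfl
  · ext X; simp [qProj, pAdj, lamProj, ObjectProperty.homMk]; rfl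
  · intro η' h1 h2
    ext X : 3
    apply CommaMorphism.ext
    · have := congrArg (fun t => NatTrans.app t X) h2
      simpa [qProj, lamProj, pAdj, ObjectProperty.homMk] using this
    · have := congrArg (fun t => NatTrans.app t X) h1
      exact this
end

section
/- Let f : A ⥤ B and g : C ⥤ A be functors between small categories. Then the square in the category Cat of small categories whose top edge is the functor Comma.preRight : Comma (𝟭 B) (g ⋙ f) ⥤ Comma (𝟭 B) f (sending (x, c, α : x ⟶ f (g c)) to (x, g c, α)), whose left and right edges are the projections Comma.snd : Comma (𝟭 B) (g ⋙ f) ⥤ C and Comma.snd : Comma (𝟭 B) f ⥤ A, and whose bottom edge is g : C ⥤ A, commutes and is a pullback square (IsPullback) in Cat. -/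
open CategoryTheory Limits

universe u

section Aux

variable {A B C T : Type u} [SmallCategory A] [SmallCategory B] [SmallCategory C]
  [SmallCategory T]

/-- Extensionality for objects of a comma category. -/
lemma comma_obj_ext {A₀ B₀ T₀ : Type u} [SmallCategory A₀] [SmallCategory B₀]
    [SmallCategory T₀] {L : A₀ ⥤ T₀} {R : B₀ ⥤ T₀} {X Y : Comma L R}
    (hl : X.left = Y.left) (hr : X.right = Y.right)
    (hh : X.hom = eqToHom (by rw [hl]) ≫ Y.hom ≫ eqToHom (by rw [hr])) : X = Y := by
  obtain ⟨xl, xr, xh⟩ := X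
  obtain ⟨yl, yr, yh⟩ := Y
  dsimp at hl hr hh
  subst hl hr
  simp at hh
  subst hh
  rfl

/-- The `hom` fields of equal comma objects agree up to `eqToHom`. -/
lemma comma_congr_hom {A₀ B₀ T₀ : Type u} [SmallCategory A₀] [SmallCategory B₀]
    [SmallCategory T₀] {L : A₀ ⥤ T₀} {R : B₀ ⥤ T₀} {X Y : Comma L R}
    (H : X = Y) :
    X.hom = eqToHom (by rw [H]) ≫ Y.hom ≫ eqToHom (by rw [H]) := by
  subst H; simp

variable (f : A ⥤ B) (g : C ⥤ A) (h : T ⥤ Comma (𝟭 B) f) (k : T ⥤ C)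
  (w : h ⋙ Comma.snd (𝟭 B) f = k ⋙ g)

/-- The lift functor for the pullback property. -/
@[simps]
def commaLift : T ⥤ Comma (𝟭 B) (g ⋙ f) where
  obj t :=
    { left := (h.obj t).left
      right := k.obj t
      hom := (h.obj t).hom ≫ eqToHom (congrArg f.obj (Functor.congr_obj w t)) }
  map {t t'} φ :=
    { left := (h.map φ).left
      right := k.map φ
      w := by
        have hw := (h.map φ).w
        have hr := Functor.congr_hom w φ
        dsimp [Comma.snd] at hw hr ⊢
        rw [reassoc_of% hw, hr]
        simp [eqToHom_map] }
  map_id t := by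
    apply CommaMorphism.ext <;> simp
  map_comp φ ψ := by
    apply CommaMorphism.ext <;> simp

lemma commaLift_fac₁ : commaLift f g h k w ⋙ Comma.preRight (𝟭 B) g f = h := by
  refine CategoryTheory.Functor.ext (fun t => ?_) (fun t t' φ => ?_)
  · refine comma_obj_ext rfl (Functor.congr_obj w t).symm ?_
    exact (Category.id_comp _).symm
  · apply CommaMorphism.ext
    · dsimp [Comma.preRight]; simp [Comma.eqToHom_left]
      erw [eqToHom_refl, eqToHom_refl, Category.id_comp, Category.comp_id]
    · have hr := Functor.congr_hom w φ
      dsimp [Comma.snd, Comma.preRight] at hr ⊢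
      simp [Comma.eqToHom_right, hr]
      erw [eqToHom_refl, eqToHom_refl, Category.id_comp, Category.comp_id]
      rfl

lemma commaLift_fac₂ : commaLift f g h k w ⋙ Comma.snd (𝟭 B) (g ⋙ f) = k := rfl

lemma commaLift_uniq (m : T ⥤ Comma (𝟭 B) (g ⋙ f))
    (hm₁ : m ⋙ Comma.preRight (𝟭 B) g f = h)
    (hm₂ : m ⋙ Comma.snd (𝟭 B) (g ⋙ f) = k) :
    m = commaLift f g h k w := by
  have hobj : ∀ t, m.obj t = (commaLift f g h k w).obj t := by
    intro t
    have e1 := Functor.congr_obj hm₁ t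
    have e2 := Functor.congr_obj hm₂ t
    dsimp [Comma.preRight, Comma.snd] at e1 e2
    refine comma_obj_ext ?_ e2 ?_
    · show (m.obj t).left = (h.obj t).left
      rw [← e1]
    · have := comma_congr_hom e1
      dsimp [Comma.preRight] at this ⊢
      refine this.trans ?_
      erw [commaLift_obj_hom]
      erw [Category.assoc, eqToHom_trans]
      rfl
  refine CategoryTheory.Functor.ext hobj (fun t t' φ => ?_)
  have e1 := Functor.congr_hom hm₁ φ
  have e2 := Functor.congr_hom hm₂ φ
  dsimp [Comma.preRight, Comma.snd] at e1 e2
  apply CommaMorphism.ext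
  · have := congrArg CommaMorphism.left e1
    dsimp [Comma.preRight] at this
    rw [this]
    simp [Comma.eqToHom_left]
    rfl
  · rw [e2]
    simp [Comma.eqToHom_right]
    rfl

end Aux

/-- For functors `f : A ⥤ B` and `g : C ⥤ A` between small categories, the square
with top edge `Comma.preRight : B/(g ⋙ f) ⥤ B/f`, vertical edges the `snd`
projections, and bottom edge `g` commutes and is a pullback square in `Cat`. -/
theorem comma_preRight_isPullback
    {A B C : Type u} [SmallCategory A] [SmallCategory B] [SmallCategory C]
    (f : A ⥤ B) (g : C ⥤ A) :
    Comma.preRight (𝟭 B) g f ⋙ Comma.snd (𝟭 B) f = Comma.snd (𝟭 B) (g ⋙ f) ⋙ g ∧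
    IsPullback (C := Cat.{u, u})
      (P := Cat.of (Comma (𝟭 B) (g ⋙ f))) (X := Cat.of (Comma (𝟭 B) f))
      (Y := Cat.of C) (Z := Cat.of A)
      (Comma.preRight (𝟭 B) g f).toCatHom (Comma.snd (𝟭 B) (g ⋙ f)).toCatHom
      (Comma.snd (𝟭 B) f).toCatHom g.toCatHom := by
  constructor
  · rfl
  · refine IsPullback.of_isLimit (c := @PullbackCone.mk Cat.{u, u} _
      (Cat.of (Comma (𝟭 B) f)) (Cat.of C) (Cat.of A)
      (Comma.snd (𝟭 B) f).toCatHom g.toCatHom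
      (Cat.of (Comma (𝟭 B) (g ⋙ f)))
      (Comma.preRight (𝟭 B) g f).toCatHom (Comma.snd (𝟭 B) (g ⋙ f)).toCatHom rfl) ?_
    exact PullbackCone.IsLimit.mk _
      (fun s => (commaLift f g s.fst.toFunctor s.snd.toFunctor
        (congrArg Cat.Hom.toFunctor s.condition)).toCatHom)
      (fun s => Cat.Hom.ext (commaLift_fac₁ f g s.fst.toFunctor s.snd.toFunctor
        (congrArg Cat.Hom.toFunctor s.condition)))
      (fun s => Cat.Hom.ext (commaLift_fac₂ f g s.fst.toFunctor s.snd.toFunctor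
        (congrArg Cat.Hom.toFunctor s.condition)))
      (fun s m hm₁ hm₂ => Cat.Hom.ext (commaLift_uniq f g s.fst.toFunctor s.snd.toFunctor
        (congrArg Cat.Hom.toFunctor s.condition) m.toFunctor
        (congrArg Cat.Hom.toFunctor hm₁) (congrArg Cat.Hom.toFunctor hm₂)))
end

section
/- Let a strictly commuting square of small categories and functors f₁ : A ⥤ B, f₂ : C ⥤ D, r : A ⥤ C, s : B ⥤ D with f₁ ⋙ s = r ⋙ f₂ be a pullback square (IsPullback) in the category Cat of small categories. If f₂ ⊣ g₂ is an l-reflection, then there exists a unique l-reflection f₁ ⊣ g₁ such that (r, s) : f₁ → f₂ is a morphism of l-reflections; moreover, if f₂ ⊣ g₂ is a p-reflection (its unit is a natural isomorphism) then so is the induced f₁ ⊣ g₁. -/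
open CategoryTheory

universe u

namespace PLR

abbrev II : Type u := ULift.{u} Bool

variable {T X Y : Type u} [SmallCategory T] [SmallCategory X] [SmallCategory Y]

lemma II_false {x y : II.{u}} (h : x ≤ y) (hx : x.down = true)
    (hy : y.down = false) : False := by
  have hb : x.down ≤ y.down := h
  rw [hx, hy] at hb
  exact absurd hb (by decide)

noncomputable def seg (t : T) : ((t, (⟨false⟩ : II.{u})) : T × II.{u}) ⟶ (t, ⟨true⟩) :=
  (𝟙 t, homOfLE (by exact Bool.false_le _))

noncomputable def cyl {F G : T ⥤ X} (α : F ⟶ G) : (T × II.{u}) ⥤ X where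
  obj x :=
    match x with
    | (t, ⟨false⟩) => F.obj t
    | (t, ⟨true⟩) => G.obj t
  map {x y} φ :=
    match x, y, φ with
    | (t, ⟨false⟩), (u, ⟨false⟩), φ => F.map φ.1
    | (_, ⟨false⟩), (u, ⟨true⟩), φ => F.map φ.1 ≫ α.app u
    | (t, ⟨true⟩), (u, ⟨true⟩), φ => G.map φ.1
    | (_, ⟨true⟩), (_, ⟨false⟩), φ => (II_false (leOfHom φ.2) rfl rfl).elim
  map_id x := by
    obtain ⟨t, ⟨b⟩⟩ := x
    cases b <;> simp
  map_comp {x y z} φ ψ := by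
    obtain ⟨t, ⟨bx⟩⟩ := x; obtain ⟨u, ⟨by'⟩⟩ := y; obtain ⟨v, ⟨bz⟩⟩ := z
    cases bx <;> cases by' <;> cases bz <;>
      first
        | exact (II_false (leOfHom ψ.2) rfl rfl).elim
        | exact (II_false (leOfHom φ.2) rfl rfl).elim
        | simp

noncomputable def inc (b : Bool) : T ⥤ T × II.{u} :=
  (𝟭 T).prod' ((Functor.const T).obj ⟨b⟩)

lemma inc_false_cyl {F G : T ⥤ X} (α : F ⟶ G) : inc false ⋙ cyl α = F := rfl
lemma inc_true_cyl {F G : T ⥤ X} (α : F ⟶ G) : inc true ⋙ cyl α = G := rfl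


@[simp] lemma cyl_obj_false {F G : T ⥤ X} (α : F ⟶ G) (t : T) :
    (cyl α).obj (t, ⟨false⟩) = F.obj t := rfl

@[simp] lemma cyl_obj_true {F G : T ⥤ X} (α : F ⟶ G) (t : T) :
    (cyl α).obj (t, ⟨true⟩) = G.obj t := rfl

@[simp] lemma cyl_map_seg {F G : T ⥤ X} (α : F ⟶ G) (t : T) :
    (cyl α).map (seg t) = α.app t := by
  show F.map (𝟙 t) ≫ α.app t = α.app t
  simp

@[simp] lemma inc_obj (b : Bool) (t : T) : (inc b).obj t = (t, (⟨b⟩ : II.{u})) := rfl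

/-- The connecting natural transformation of a cylinder. -/
noncomputable def connectNat (M : T × II.{u} ⥤ X) : (inc false ⋙ M) ⟶ (inc true ⋙ M) where
  app t := M.map (seg t)
  naturality t u φ := by
    dsimp
    erw [← M.map_comp, ← M.map_comp]
    congr 1
    refine Prod.ext ?_ (Subsingleton.elim _ _)
    show φ ≫ 𝟙 u = 𝟙 t ≫ φ
    simp

@[simp] lemma connectNat_app (M : T × II.{u} ⥤ X) (t : T) :
    (connectNat M).app t = M.map (seg t) := rfl

lemma connectNat_cyl {F G : T ⥤ X} (α : F ⟶ G) : connectNat (cyl α) = α := by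
  ext t
  simp

lemma whiskerRight_connectNat (M : T × II.{u} ⥤ X) (H : X ⥤ Y) :
    Functor.whiskerRight (connectNat M) H = connectNat (M ⋙ H) := rfl

lemma connectNat_congr {M M' : T × II.{u} ⥤ X} (h : M = M') :
    connectNat M =
      eqToHom (by rw [h]) ≫ connectNat M' ≫ eqToHom (by rw [h]) := by
  subst h; simp

lemma cyl_comp {F G : T ⥤ X} (α : F ⟶ G) (H : X ⥤ Y) :
    cyl α ⋙ H = cyl (Functor.whiskerRight α H) := by
  refine Functor.hext ?_ ?_
  · rintro ⟨t, ⟨b⟩⟩; cases b <;> rfl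
  · rintro ⟨t, ⟨b⟩⟩ ⟨t', ⟨b'⟩⟩ φ
    cases b <;> cases b' <;>
      first
        | exact (II_false (leOfHom φ.2) rfl rfl).elim
        | (apply heq_of_eq; simp [cyl, ← Functor.map_comp])

lemma cyl_congr {F F' G G' : T ⥤ X} (hF : F = F') (hG : G = G')
    (α : F ⟶ G) (α' : F' ⟶ G') (h : α ≫ eqToHom hG = eqToHom hF ≫ α') :
    cyl α = cyl α' := by
  subst hF; subst hG
  simp only [eqToHom_refl, Category.comp_id, Category.id_comp] at h
  rw [h]

lemma whiskerRight_eqToHom {F G : T ⥤ X} (h : F = G) (H : X ⥤ Y) :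
    Functor.whiskerRight (eqToHom h) H = eqToHom (by rw [h]) := by
  subst h; simp

lemma whiskerLeft_eqToHom {F G : T ⥤ X} (K : Y ⥤ T) (h : F = G) :
    Functor.whiskerLeft K (eqToHom h) = eqToHom (by rw [h]) := by
  subst h; simp


lemma adj_ext {X Y : Type u} [SmallCategory X] [SmallCategory Y]
    {F : X ⥤ Y} {G : Y ⥤ X} (a b : F ⊣ G)
    (hu : a.unit = b.unit) (hc : a.counit = b.counit) : a = b := by
  cases a; cases b; cases hu; cases hc; rfl

section PB

variable {A B C D : Type u} [SmallCategory A] [SmallCategory B]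
  [SmallCategory C] [SmallCategory D]
variable {f₁ : A ⥤ B} {f₂ : C ⥤ D} {r : A ⥤ C} {s : B ⥤ D}

/-- View a functor between small categories as a morphism in `Cat`. -/
def toCatHom {X Y : Type u} [SmallCategory X] [SmallCategory Y] (F : X ⥤ Y) :
    Cat.of X ⟶ Cat.of Y := F.toCatHom

lemma eqToHom_sandwich {E : Type u} [Category.{u} E] {X₀ X₁ Y₀ Y₁ : E}
    (p : X₀ = X₁) (q : X₁ = X₀) (g : X₀ ⟶ Y₀) (q' : Y₀ = Y₁) (p' : Y₁ = Y₀) :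
    eqToHom p ≫ (eqToHom q ≫ g ≫ eqToHom q') ≫ eqToHom p' = g := by
  subst p; subst p'; simp

lemma hom_ext'
    (hpb : IsPullback (C := Cat.{u, u})
      (P := Cat.of A) (X := Cat.of B) (Y := Cat.of C) (Z := Cat.of D)
      f₁.toCatHom r.toCatHom s.toCatHom f₂.toCatHom)
    {W : Type u} [SmallCategory W] {k l : W ⥤ A}
    (h₁ : k ⋙ f₁ = l ⋙ f₁) (h₂ : k ⋙ r = l ⋙ r) : k = l :=
  congrArg Cat.Hom.toFunctor (hpb.hom_ext (W := Cat.of W) (k := k.toCatHom) (l := l.toCatHom)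
    (congrArg Functor.toCatHom h₁) (congrArg Functor.toCatHom h₂))

lemma nat_jf
    (hpb : IsPullback (C := Cat.{u, u})
      (P := Cat.of A) (X := Cat.of B) (Y := Cat.of C) (Z := Cat.of D)
      f₁.toCatHom r.toCatHom s.toCatHom f₂.toCatHom)
    {T : Type u} [SmallCategory T] {P Q : T ⥤ A} (α α' : P ⟶ Q)
    (hB : Functor.whiskerRight α f₁ = Functor.whiskerRight α' f₁)
    (hC : Functor.whiskerRight α r = Functor.whiskerRight α' r) : α = α' := by
  have hc : cyl α = cyl α' := by
    refine hom_ext' hpb (k := cyl α) (l := cyl α') ?_ ?_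
    · show cyl α ⋙ f₁ = cyl α' ⋙ f₁
      rw [cyl_comp, cyl_comp, hB]
    · show cyl α ⋙ r = cyl α' ⋙ r
      rw [cyl_comp, cyl_comp, hC]
  ext t
  have h := Functor.congr_hom hc (seg t)
  simp at h
  exact h.trans (Category.id_comp _)

lemma nat_lift
    (hpb : IsPullback (C := Cat.{u, u})
      (P := Cat.of A) (X := Cat.of B) (Y := Cat.of C) (Z := Cat.of D)
      f₁.toCatHom r.toCatHom s.toCatHom f₂.toCatHom)
    {T : Type u} [SmallCategory T] {P Q : T ⥤ A}
    (β : P ⋙ f₁ ⟶ Q ⋙ f₁) (γ : P ⋙ r ⟶ Q ⋙ r)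
    (hcomp : toCatHom (cyl β) ≫ toCatHom s = toCatHom (cyl γ) ≫ toCatHom f₂) :
    ∃ α : P ⟶ Q, Functor.whiskerRight α f₁ = β ∧ Functor.whiskerRight α r = γ := by
  obtain ⟨L, hLf', hLr'⟩ : ∃ L : Cat.of (T × II.{u}) ⟶ Cat.of A,
      L ≫ toCatHom f₁ = toCatHom (cyl β) ∧ L ≫ toCatHom r = toCatHom (cyl γ) :=
    by
      refine ⟨hpb.lift (toCatHom (cyl β)) (toCatHom (cyl γ)) hcomp, ?_, ?_⟩
      · exact hpb.lift_fst (toCatHom (cyl β)) (toCatHom (cyl γ)) hcomp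
      · exact hpb.lift_snd (toCatHom (cyl β)) (toCatHom (cyl γ)) hcomp
  obtain ⟨L', hLf, hLr⟩ : ∃ L' : T × II.{u} ⥤ A, L' ⋙ f₁ = cyl β ∧ L' ⋙ r = cyl γ :=
    ⟨L.toFunctor, congrArg Cat.Hom.toFunctor hLf', congrArg Cat.Hom.toFunctor hLr'⟩
  have h₀ : inc false ⋙ L' = P := by
    refine hom_ext' hpb (k := inc false ⋙ L') (l := P) ?_ ?_
    · show (inc false ⋙ L') ⋙ f₁ = P ⋙ f₁
      rw [Functor.assoc, hLf]; rfl
    · show (inc false ⋙ L') ⋙ r = P ⋙ r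
      rw [Functor.assoc, hLr]; rfl
  have h₁ : inc true ⋙ L' = Q := by
    refine hom_ext' hpb (k := inc true ⋙ L') (l := Q) ?_ ?_
    · show (inc true ⋙ L') ⋙ f₁ = Q ⋙ f₁
      rw [Functor.assoc, hLf]; rfl
    · show (inc true ⋙ L') ⋙ r = Q ⋙ r
      rw [Functor.assoc, hLr]; rfl
  refine ⟨eqToHom h₀.symm ≫ connectNat L' ≫ eqToHom h₁, ?_, ?_⟩
  · ext t
    have hm := Functor.congr_hom hLf (seg t)
    simp only [Functor.comp_map] at hm
    rw [Functor.whiskerRight_app, NatTrans.comp_app, NatTrans.comp_app, Functor.map_comp,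
      Functor.map_comp, connectNat_app, eqToHom_app, eqToHom_app, eqToHom_map, eqToHom_map]
    erw [hm]
    exact (eqToHom_sandwich _ _ _ _ _).trans (cyl_map_seg _ t)
  · ext t
    have hm := Functor.congr_hom hLr (seg t)
    simp only [Functor.comp_map] at hm
    rw [Functor.whiskerRight_app, NatTrans.comp_app, NatTrans.comp_app, Functor.map_comp,
      Functor.map_comp, connectNat_app, eqToHom_app, eqToHom_app, eqToHom_map, eqToHom_map]
    erw [hm]
    exact (eqToHom_sandwich _ _ _ _ _).trans (cyl_map_seg _ t)

end PB
end PLR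

open PLR

variable {A B C D : Type u} [SmallCategory A] [SmallCategory B]
  [SmallCategory C] [SmallCategory D]

/-- `adj` is an l-reflection: its counit is an identity. -/
def IsLRefl {X Y : Type u} [SmallCategory X] [SmallCategory Y]
    {F : X ⥤ Y} {G : Y ⥤ X} (adj : F ⊣ G) : Prop :=
  ∃ h : G ⋙ F = 𝟭 Y, adj.counit = eqToHom h

/-- `(r, s)` is a morphism of reflections from `adj₁` to `adj₂` (over the strictly
commuting square `f₁ ⋙ s = r ⋙ f₂`): the squares of right adjoints commute and the
whiskered units agree. -/
def IsReflMorphism {f₁ : A ⥤ B} {g₁ : B ⥤ A} {f₂ : C ⥤ D} {g₂ : D ⥤ C}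
    (adj₁ : f₁ ⊣ g₁) (adj₂ : f₂ ⊣ g₂) (r : A ⥤ C) (s : B ⥤ D)
    (hsq : f₁ ⋙ s = r ⋙ f₂) : Prop :=
  ∃ h : g₁ ⋙ r = s ⋙ g₂,
    Functor.whiskerRight adj₁.unit r ≫
        eqToHom (show (f₁ ⋙ g₁) ⋙ r = r ⋙ (f₂ ⋙ g₂) by
          rw [Functor.assoc, h, ← Functor.assoc, hsq, Functor.assoc]) =
      Functor.whiskerLeft r adj₂.unit

/-- Given a strict pullback square `(f₁, r, s, f₂)` in `Cat` and an l-reflection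
`f₂ ⊣ g₂`, there is a unique l-reflection `f₁ ⊣ g₁` making `(r, s)` a morphism of
l-reflections; moreover it is a p-reflection whenever `f₂ ⊣ g₂` is. -/
theorem pullback_lifts_l_reflections
    (f₁ : A ⥤ B) (f₂ : C ⥤ D) (r : A ⥤ C) (s : B ⥤ D)
    (hsq : f₁ ⋙ s = r ⋙ f₂)
    (hpb : IsPullback (C := Cat.{u, u})
      (P := Cat.of A) (X := Cat.of B) (Y := Cat.of C) (Z := Cat.of D)
      f₁.toCatHom r.toCatHom s.toCatHom f₂.toCatHom)
    (g₂ : D ⥤ C) (adj₂ : f₂ ⊣ g₂) (hl₂ : IsLRefl adj₂) :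
    ∃ (g₁ : B ⥤ A) (adj₁ : f₁ ⊣ g₁),
      IsLRefl adj₁ ∧
      IsReflMorphism adj₁ adj₂ r s hsq ∧
      (IsIso adj₂.unit → IsIso adj₁.unit) ∧
      ∀ (g₁' : B ⥤ A) (adj₁' : f₁ ⊣ g₁'),
        IsLRefl adj₁' → IsReflMorphism adj₁' adj₂ r s hsq →
        g₁' = g₁ ∧ HEq adj₁' adj₁ := by
  obtain ⟨hgf₂, hε₂⟩ := hl₂
  -- component facts for `adj₂`
  have K1 : ∀ c : C, f₂.map (adj₂.unit.app c) =
      eqToHom (show f₂.obj c = f₂.obj ((f₂ ⋙ g₂).obj c) by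
        simpa using (Functor.congr_obj hgf₂ (f₂.obj c)).symm) := by
    intro c
    have h := adj₂.left_triangle_components c
    rw [hε₂, eqToHom_app, comp_eqToHom_iff] at h
    rw [h]; simp
  have K2 : ∀ (x : C) (d : D) (_ : x = g₂.obj d), adj₂.unit.app x =
      eqToHom (show (𝟭 C).obj x = (f₂ ⋙ g₂).obj x by
        subst_vars
        simpa using (congrArg g₂.obj (Functor.congr_obj hgf₂ d)).symm) := by
    rintro x d rfl
    have h := adj₂.right_triangle_components d
    rw [hε₂, eqToHom_app, eqToHom_map, comp_eqToHom_iff] at h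
    rw [h]; simp
  -- the lifted right adjoint
  have wg : toCatHom (𝟭 B) ≫ toCatHom s = toCatHom (s ⋙ g₂) ≫ toCatHom f₂ := by
    apply Cat.ext; show 𝟭 B ⋙ s = (s ⋙ g₂) ⋙ f₂
    rw [Functor.id_comp, Functor.assoc, hgf₂, Functor.comp_id]
  obtain ⟨g₁, hgf, hg₁r⟩ : ∃ G : B ⥤ A, G ⋙ f₁ = 𝟭 B ∧ G ⋙ r = s ⋙ g₂ := by
    refine ⟨(hpb.lift (toCatHom (𝟭 B)) (toCatHom (s ⋙ g₂)) wg).toFunctor, ?_, ?_⟩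
    · exact congrArg Cat.Hom.toFunctor (hpb.lift_fst (toCatHom (𝟭 B)) (toCatHom (s ⋙ g₂)) wg)
    · exact congrArg Cat.Hom.toFunctor (hpb.lift_snd (toCatHom (𝟭 B)) (toCatHom (s ⋙ g₂)) wg)
  -- functor equalities
  have e₀ : (𝟭 A ⋙ f₁ : A ⥤ B) = (f₁ ⋙ g₁) ⋙ f₁ := by
    rw [Functor.id_comp, Functor.assoc, hgf, Functor.comp_id]
  have e₁ : (𝟭 A ⋙ r : A ⥤ C) = r ⋙ 𝟭 C := by
    rw [Functor.id_comp, Functor.comp_id]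
  have e₂ : (r ⋙ (f₂ ⋙ g₂) : A ⥤ C) = (f₁ ⋙ g₁) ⋙ r := by
    rw [Functor.assoc, hg₁r, ← Functor.assoc, ← hsq, Functor.assoc]
  -- construct the unit
  have hcomp : toCatHom (cyl (eqToHom e₀)) ≫ toCatHom s =
      toCatHom (cyl (eqToHom e₁ ≫ Functor.whiskerLeft r adj₂.unit ≫ eqToHom e₂)) ≫ toCatHom f₂ := by
    apply Cat.ext; show cyl _ ⋙ s = cyl _ ⋙ f₂
    rw [cyl_comp, cyl_comp]
    refine cyl_congr ?_ ?_ _ _ ?_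
    · simp only [Functor.assoc]; rw [hsq]
    · simp only [Functor.assoc]; rw [hsq]
    · ext a
      simp [eqToHom_app, eqToHom_map, whiskerRight_eqToHom, K1]
  obtain ⟨η₁, wηf, wηr⟩ := nat_lift hpb (eqToHom e₀)
    (eqToHom e₁ ≫ Functor.whiskerLeft r adj₂.unit ≫ eqToHom e₂) hcomp
  -- component facts for the unit
  have hη₁f : ∀ a : A, f₁.map (η₁.app a) = eqToHom (Functor.congr_obj e₀ a) := by
    intro a
    have h := NatTrans.congr_app wηf a
    simpa [eqToHom_app] using h
  have hη₁r : ∀ a : A, r.map (η₁.app a) =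
      eqToHom (Functor.congr_obj e₁ a) ≫ adj₂.unit.app (r.obj a) ≫
        eqToHom (Functor.congr_obj e₂ a) := by
    intro a
    have h := NatTrans.congr_app wηr a
    simpa [eqToHom_app] using h
  -- triangle identities
  have hlt : ∀ a : A, f₁.map (η₁.app a) ≫ (eqToHom hgf).app (f₁.obj a) = 𝟙 (f₁.obj a) := by
    intro a
    rw [hη₁f a, eqToHom_app]
    simp
  have e₃ : (g₁ ⋙ 𝟭 A : B ⥤ A) = g₁ ⋙ (f₁ ⋙ g₁) := by
    rw [Functor.comp_id, ← Functor.assoc, hgf, Functor.id_comp]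
  have hjf : Functor.whiskerLeft g₁ η₁ = eqToHom e₃ := by
    refine nat_jf hpb _ _ ?_ ?_
    · ext b
      simp [hη₁f, eqToHom_app, eqToHom_map, whiskerRight_eqToHom]
    · ext b
      have hobj : r.obj (g₁.obj b) = g₂.obj (s.obj b) := Functor.congr_obj hg₁r b
      simp only [Functor.whiskerRight_app, Functor.whiskerLeft_app]
      rw [hη₁r (g₁.obj b), K2 _ (s.obj b) hobj]
      simp [eqToHom_app, eqToHom_map, whiskerRight_eqToHom]
  have hrt : ∀ b : B, η₁.app (g₁.obj b) ≫ g₁.map ((eqToHom hgf).app b) = 𝟙 (g₁.obj b) := by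
    intro b
    have h := NatTrans.congr_app hjf b
    simp only [Functor.whiskerLeft_app] at h
    rw [h, eqToHom_app, eqToHom_app, eqToHom_map]
    simp
  -- the reflection-morphism equation
  have hrm : Functor.whiskerRight η₁ r ≫
      eqToHom (show ((f₁ ⋙ g₁) ⋙ r : A ⥤ C) = r ⋙ (f₂ ⋙ g₂) from e₂.symm) =
      Functor.whiskerLeft r adj₂.unit := by
    rw [wηr]
    ext a
    simp [eqToHom_app]
  refine ⟨g₁, ⟨η₁, eqToHom hgf, hlt, hrt⟩, ⟨hgf, rfl⟩, ⟨hg₁r, hrm⟩, ?_, ?_⟩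
  · -- p-reflection
    intro hiso
    have hinv1 : ∀ x : C, adj₂.unit.app x ≫ (inv adj₂.unit).app x = 𝟙 _ := by
      intro x
      have h := NatTrans.congr_app (IsIso.hom_inv_id adj₂.unit) x
      simpa using h
    have hinv2 : ∀ x : C, (inv adj₂.unit).app x ≫ adj₂.unit.app x = 𝟙 _ := by
      intro x
      have h := NatTrans.congr_app (IsIso.inv_hom_id adj₂.unit) x
      simpa using h
    have hinv1' : ∀ (x : C) {Z : C} (k : (𝟭 C).obj x ⟶ Z),
        adj₂.unit.app x ≫ (inv adj₂.unit).app x ≫ k = k := by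
      intro x Z k
      rw [← Category.assoc, hinv1 x, Category.id_comp]
    have hinv2' : ∀ (x : C) {Z : C} (k : (f₂ ⋙ g₂).obj x ⟶ Z),
        (inv adj₂.unit).app x ≫ adj₂.unit.app x ≫ k = k := by
      intro x Z k
      rw [← Category.assoc, hinv2 x, Category.id_comp]
    have KI : ∀ c : C, f₂.map ((inv adj₂.unit).app c) =
        eqToHom (show f₂.obj ((f₂ ⋙ g₂).obj c) = f₂.obj c by
          simpa using Functor.congr_obj hgf₂ (f₂.obj c)) := by
      intro c
      have h : f₂.map (adj₂.unit.app c) ≫ f₂.map ((inv adj₂.unit).app c) = 𝟙 _ := by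
        rw [← f₂.map_comp, hinv1 c]
        simp
      rw [K1 c, eqToHom_comp_iff] at h
      rw [h]; simp
    have hcomp' : toCatHom (cyl (eqToHom e₀.symm)) ≫ toCatHom s =
        toCatHom (cyl (eqToHom e₂.symm ≫ Functor.whiskerLeft r (inv adj₂.unit) ≫ eqToHom e₁.symm)) ≫
          toCatHom f₂ := by
      apply Cat.ext; show cyl _ ⋙ s = cyl _ ⋙ f₂
      rw [cyl_comp, cyl_comp]
      refine cyl_congr ?_ ?_ _ _ ?_
      · simp only [Functor.assoc]; rw [hsq]
      · simp only [Functor.assoc]; rw [hsq]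
      · ext a
        simp [eqToHom_app, eqToHom_map, whiskerRight_eqToHom, KI, hε₂]
    obtain ⟨θ, wθf, wθr⟩ := nat_lift hpb (eqToHom e₀.symm)
      (eqToHom e₂.symm ≫ Functor.whiskerLeft r (inv adj₂.unit) ≫ eqToHom e₁.symm) hcomp'
    have hθf : ∀ a : A, f₁.map (θ.app a) = eqToHom (Functor.congr_obj e₀.symm a) := by
      intro a
      have h := NatTrans.congr_app wθf a
      simpa [eqToHom_app] using h
    have hθr : ∀ a : A, r.map (θ.app a) =
        eqToHom (Functor.congr_obj e₂.symm a) ≫ (inv adj₂.unit).app (r.obj a) ≫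
          eqToHom (Functor.congr_obj e₁.symm a) := by
      intro a
      have h := NatTrans.congr_app wθr a
      simpa [eqToHom_app] using h
    refine ⟨θ, ?_, ?_⟩
    · refine nat_jf hpb _ _ ?_ ?_
      · ext a
        simp [hη₁f, hθf]
      · ext a
        simp [hη₁r, hθr, hinv1']
    · refine nat_jf hpb _ _ ?_ ?_
      · ext a
        simp [hη₁f, hθf]
      · ext a
        simp [hη₁r, hθr, hinv2']
  · -- uniqueness
    intro g₁'' adj₁' hl' hm'
    obtain ⟨hgf', hε'⟩ := hl'
    obtain ⟨hg₁r', hw'⟩ := hm'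
    have hg : g₁'' = g₁ := by
      refine hom_ext' hpb (k := g₁'') (l := g₁) ?_ ?_
      · show g₁'' ⋙ f₁ = g₁ ⋙ f₁
        rw [hgf', hgf]
      · show g₁'' ⋙ r = g₁ ⋙ r
        rw [hg₁r', hg₁r]
    subst hg
    refine ⟨rfl, heq_of_eq ?_⟩
    refine adj_ext _ _ ?_ ?_
    · -- units agree
      refine nat_jf hpb _ _ ?_ ?_
      · have hlt' : ∀ a : A, f₁.map (adj₁'.unit.app a) = eqToHom (Functor.congr_obj e₀ a) := by
          intro a
          have h := adj₁'.left_triangle_components a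
          rw [hε', eqToHom_app, comp_eqToHom_iff] at h
          rw [h]; simp
        ext a
        simp [hlt', hη₁f]
      · have hcan := hw'.trans hrm.symm
        exact (cancel_mono (eqToHom e₂.symm)).mp hcan
    · -- counits agree
      rw [hε']
end

section
/- Let f : A ⥤ B be a functor and X any category. Given functors t, t' : X ⥤ B/f and natural transformations θ_p : t ⋙ p_f ⟶ t' ⋙ p_f and θ_q : t ⋙ q_f ⟶ t' ⋙ q_f satisfying θ_q ≫ whiskerLeft t' λ_f = whiskerLeft t λ_f ≫ whiskerRight θ_p f, there exists a unique natural transformation φ : t ⟶ t' with whiskerRight φ p_f = θ_p and whiskerRight φ q_f = θ_q. This is the two-dimensional universal property of the comma category B/f as the colax limit of the arrow f. -/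
open CategoryTheory

universe v₁ v₂ v₃ u₁ u₂ u₃

variable {A : Type u₁} [Category.{v₁} A] {B : Type u₂} [Category.{v₂} B]

/-- Two-dimensional universal property of the comma category `B/f` as the colax
limit of the arrow `f`: modifications of cones factor uniquely through the
projections. -/
theorem comma_colax_limit_two_dimensional (f : A ⥤ B)
    {X : Type u₃} [Category.{v₃} X] (t t' : X ⥤ Comma (𝟭 B) f)
    (θp : t ⋙ Comma.snd (𝟭 B) f ⟶ t' ⋙ Comma.snd (𝟭 B) f)
    (θq : t ⋙ Comma.fst (𝟭 B) f ⟶ t' ⋙ Comma.fst (𝟭 B) f)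
    (compat : θq ≫ Functor.whiskerLeft t' (Comma.natTrans (𝟭 B) f) =
      Functor.whiskerLeft t (Comma.natTrans (𝟭 B) f) ≫ Functor.whiskerRight θp f) :
    ∃! φ : t ⟶ t',
      Functor.whiskerRight φ (Comma.snd (𝟭 B) f) = θp ∧
      Functor.whiskerRight φ (Comma.fst (𝟭 B) f) = θq := by
  refine ⟨{ app := fun x => ⟨θq.app x, θp.app x, ?_⟩
            naturality := ?_ }, ⟨?_, ?_⟩, ?_⟩
  · have := congr_arg (fun η => NatTrans.app η x) compat
    simpa using this
  · intro x y g
    ext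
    · simpa using θq.naturality g
    · simpa using θp.naturality g
  · ext x; simp
  · ext x; simp
  · rintro φ ⟨hp, hq⟩
    ext x
    · simpa using congr_arg (fun η => NatTrans.app η x) hq
    · simpa using congr_arg (fun η => NatTrans.app η x) hp
end

section
/- Let f : A ⥤ B be a functor and let P_f be the full subcategory of B/f spanned by the objects (x, a, α) with α an isomorphism, with restricted projections p : P_f ⥤ A, q : P_f ⥤ B and restricted canonical transformation λ : q ⟶ p ⋙ f (a natural isomorphism). Then: (1) for every category X, functors r : X ⥤ A, s : X ⥤ B and natural isomorphism φ : s ≅ r ⋙ f there is a unique functor t : X ⥤ P_f with t ⋙ p = r, t ⋙ q = s and whiskerLeft t λ = φ.hom; (2) given t, t' : X ⥤ P_f and natural transformations θ_p : t ⋙ p ⟶ t' ⋙ p, θ_q : t ⋙ q ⟶ t' ⋙ q satisfying θ_q ≫ whiskerLeft t' λ = whiskerLeft t λ ≫ whiskerRight θ_p f, there is a unique φ : t ⟶ t' with whiskerRight φ p = θ_p and whiskerRight φ q = θ_q. Thus P_f is the pseudolimit of the arrow f in the 2-category of categories. -/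
open CategoryTheory

universe v₁ v₂ v₃ u₁ u₂ u₃

variable {A : Type u₁} [Category.{v₁} A] {B : Type u₂} [Category.{v₂} B]

set_option linter.unnecessarySimpa false

-- object extensionality
lemma myCommaExt {f : A ⥤ B} {c d : Comma (𝟭 B) f} (h1 : c.left = d.left)
    (h2 : c.right = d.right)
    (h3 : c.hom = eqToHom h1 ≫ d.hom ≫ eqToHom (congrArg f.obj h2).symm) : c = d := by
  obtain ⟨cl, cr, ch⟩ := c
  obtain ⟨dl, dr, dh⟩ := d
  dsimp at h1 h2 h3
  subst h1; subst h2
  simp at h3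
  subst h3
  rfl

lemma myPObjExt {f : A ⥤ B} {c d : PseudoLimitArrow f} (h : c.obj = d.obj) : c = d := by
  obtain ⟨c, hc⟩ := c; obtain ⟨d, hd⟩ := d
  dsimp at h; subst h; rfl

lemma myHomExt {f : A ⥤ B} {c d : PseudoLimitArrow f} (u v : c ⟶ d)
    (h1 : (pProj f).map u = (pProj f).map v)
    (h2 : (qProj f).map u = (qProj f).map v) : u = v :=
  InducedCategory.hom_ext (CommaMorphism.ext h2 h1)

def mkCone {f : A ⥤ B} {X : Type u₃} [Category.{v₃} X]
    (r : X ⥤ A) (s : X ⥤ B) (φ : s ≅ r ⋙ f) : X ⥤ PseudoLimitArrow f where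
  obj x := ⟨⟨s.obj x, r.obj x, φ.hom.app x⟩, inferInstance⟩
  map {x y} g := ⟨s.map g, r.map g, by simpa using (φ.hom.naturality g).symm⟩
  map_id x := by apply InducedCategory.hom_ext; apply CommaMorphism.ext <;> simp <;> rfl
  map_comp g h := by apply InducedCategory.hom_ext; apply CommaMorphism.ext <;> simp <;> rfl

/-- The one- and two-dimensional universal properties of `P_f` as the pseudolimit
of the arrow `f` in the 2-category of categories. -/
theorem pseudolimit_universal_property (f : A ⥤ B)
    {X : Type u₃} [Category.{v₃} X] :
    -- (1) one-dimensional universal property, for pseudo-cones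
    (∀ (r : X ⥤ A) (s : X ⥤ B) (φ : s ≅ r ⋙ f),
      ∃! t : X ⥤ PseudoLimitArrow f,
        ∃ (h1 : t ⋙ pProj f = r) (h2 : t ⋙ qProj f = s),
          Functor.whiskerLeft t (lamProj f) =
            eqToHom h2 ≫ φ.hom ≫
              eqToHom (show r ⋙ f = t ⋙ (pProj f ⋙ f) by rw [← Functor.assoc, h1])) ∧
    -- (2) two-dimensional universal property
    (∀ (t t' : X ⥤ PseudoLimitArrow f)
      (θp : t ⋙ pProj f ⟶ t' ⋙ pProj f) (θq : t ⋙ qProj f ⟶ t' ⋙ qProj f),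
      θq ≫ Functor.whiskerLeft t' (lamProj f) =
          Functor.whiskerLeft t (lamProj f) ≫ Functor.whiskerRight θp f →
        ∃! φ : t ⟶ t',
          Functor.whiskerRight φ (pProj f) = θp ∧ Functor.whiskerRight φ (qProj f) = θq) := by
  constructor
  · intro r s φ
    refine ⟨mkCone r s φ, ?_, ?_⟩
    · refine ⟨rfl, rfl, ?_⟩
      ext x
      simp [mkCone, lamProj, pProj, qProj, eqToHom_app]
      exact (Category.id_comp _).symm
    · rintro t' ⟨h1, h2, h3⟩
      -- show t' = our t
      have hobj : ∀ x, (t'.obj x).obj.right = r.obj x := fun x => Functor.congr_obj h1 x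
      have hobj2 : ∀ x, (t'.obj x).obj.left = s.obj x := fun x => Functor.congr_obj h2 x
      have hhom : ∀ x, (t'.obj x).obj.hom =
          eqToHom (hobj2 x) ≫ φ.hom.app x ≫ eqToHom (congrArg f.obj (hobj x)).symm := by
        intro x
        have := NatTrans.congr_app h3 x
        simp only [Functor.whiskerLeft_app, NatTrans.comp_app] at this
        rw [eqToHom_app, eqToHom_app] at this
        simpa [lamProj, pProj, qProj, eqToHom_map] using this
      apply CategoryTheory.Functor.ext
      · intro x y g
        apply myHomExt
        · rw [Functor.map_comp, Functor.map_comp, eqToHom_map, eqToHom_map]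
          have := Functor.congr_hom h1 g
          simpa [pProj, mkCone] using this
        · rw [Functor.map_comp, Functor.map_comp, eqToHom_map, eqToHom_map]
          have := Functor.congr_hom h2 g
          simpa [qProj, mkCone] using this
      · intro x
        apply myPObjExt
        exact myCommaExt (hobj2 x) (hobj x) (hhom x)
  · intro t t' θp θq hc
    have w : ∀ x, θq.app x ≫ (t'.obj x).obj.hom = (t.obj x).obj.hom ≫ f.map (θp.app x) := by
      intro x
      have := NatTrans.congr_app hc x
      simp only [NatTrans.comp_app, Functor.whiskerLeft_app, Functor.whiskerRight_app] at this
      simpa [lamProj, pProj, qProj] using this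
    refine ⟨{ app := fun x => ⟨θq.app x, θp.app x, by exact w x⟩
              naturality := by
                intro x y g
                apply myHomExt
                · simpa [pProj] using θp.naturality g
                · simpa [qProj] using θq.naturality g }, ⟨?_, ?_⟩, ?_⟩
    · ext x; rfl
    · ext x; rfl
    · rintro ψ ⟨hp, hq⟩
      refine NatTrans.ext (funext fun x => ?_)
      apply myHomExt
      · exact (NatTrans.congr_app hp x)
      · exact (NatTrans.congr_app hq x)
end

section
/- Let A and B be monoidal categories, G : A ⥤ B a strong monoidal functor, and F ⊣ G an adjunction with F : B ⥤ A, unit η : 𝟭 B ⟶ F ⋙ G and counit ε : G ⋙ F ⟶ 𝟭 A. Then there is exactly one oplax monoidal structure on F for which η and ε are monoidal with respect to the induced oplax monoidal structures on identity and composite functors, i.e. satisfy, for a transformation τ between oplax monoidal functors, τ.app (x ⊗ y) ≫ δ^{target}_{x,y} = δ^{source}_{x,y} ≫ (τ.app x ⊗ τ.app y) and τ.app 𝟙 ≫ (unit constraint of target) = (unit constraint of source). Its structure morphisms are δ^F_{b,b'} = F.map ((η.app b ⊗ η.app b') ≫ μ^G_{F b, F b'}) ≫ ε.app (F b ⊗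 F b') : F (b ⊗ b') ⟶ F b ⊗ F b' and F.map u^G ≫ ε.app 𝟙_A : F 𝟙_B ⟶ 𝟙_A, where μ^G and u^G : 𝟙_B ⟶ G 𝟙_A denote the (invertible) structure morphisms of G. -/
open CategoryTheory MonoidalCategory

universe v₁ v₂ u₁ u₂

variable {A : Type u₁} [Category.{v₁} A] [MonoidalCategory A]
  {B : Type u₂} [Category.{v₂} B] [MonoidalCategory B]

/-- Given an oplax monoidal structure on `F`, the unit and counit of `F ⊣ G` are
monoidal with respect to the induced oplax structures on identity and composite
functors. -/
def OplaxDoctrinalConds {G : A ⥤ B} [G.Monoidal] {F : B ⥤ A} (adj : F ⊣ G)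
    (O : F.OplaxMonoidal) : Prop :=
  letI := O;
  ((∀ x y : B,
      adj.unit.app (x ⊗ y) ≫ Functor.OplaxMonoidal.δ (F ⋙ G) x y =
        Functor.OplaxMonoidal.δ (𝟭 B) x y ≫ (adj.unit.app x ⊗ₘ adj.unit.app y)) ∧
    adj.unit.app (𝟙_ B) ≫ Functor.OplaxMonoidal.η (F ⋙ G) =
      Functor.OplaxMonoidal.η (𝟭 B)) ∧
  ((∀ x y : A,
      adj.counit.app (x ⊗ y) ≫ Functor.OplaxMonoidal.δ (𝟭 A) x y =
        Functor.OplaxMonoidal.δ (G ⋙ F) x y ≫ (adj.counit.app x ⊗ₘ adj.counit.app y)) ∧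
    adj.counit.app (𝟙_ A) ≫ Functor.OplaxMonoidal.η (𝟭 A) =
      Functor.OplaxMonoidal.η (G ⋙ F))

open Category Functor.LaxMonoidal Functor.OplaxMonoidal

namespace DoctrinalAux

variable {G : A ⥤ B} [G.Monoidal] {F : B ⥤ A} (adj : F ⊣ G)

/-- The mate oplax structure. -/
def mateOplax : F.OplaxMonoidal where
  η := (adj.homEquiv _ _).symm (ε G)
  δ X Y := (adj.homEquiv _ _).symm ((adj.unit.app X ⊗ₘ adj.unit.app Y) ≫ μ G _ _)
  δ_natural_left {X Y} f X' := by
    apply (adj.homEquiv _ _).injective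
    rw [Adjunction.homEquiv_naturality_right, Adjunction.homEquiv_naturality_left,
      Equiv.apply_symm_apply, Equiv.apply_symm_apply, assoc, ← μ_natural_left]
    rw [← tensorHom_id, ← tensorHom_id, tensorHom_comp_tensorHom_assoc, tensorHom_comp_tensorHom_assoc,
      adj.unit_naturality]
    simp
  δ_natural_right {X Y} X' f := by
    apply (adj.homEquiv _ _).injective
    rw [Adjunction.homEquiv_naturality_right, Adjunction.homEquiv_naturality_left,
      Equiv.apply_symm_apply, Equiv.apply_symm_apply, assoc, ← μ_natural_right]
    rw [← id_tensorHom, ← id_tensorHom, tensorHom_comp_tensorHom_assoc, tensorHom_comp_tensorHom_assoc,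
      adj.unit_naturality]
    simp
  oplax_associativity X Y Z := by
    have h : ∀ P Q : B, adj.unit.app (P ⊗ Q) ≫
        G.map ((adj.homEquiv _ _).symm ((adj.unit.app P ⊗ₘ adj.unit.app Q) ≫ μ G _ _)) =
        (adj.unit.app P ⊗ₘ adj.unit.app Q) ≫ μ G _ _ := fun P Q => by
      have := (adj.homEquiv (P ⊗ Q) (F.obj P ⊗ F.obj Q)).apply_symm_apply
        ((adj.unit.app P ⊗ₘ adj.unit.app Q) ≫ μ G (F.obj P) (F.obj Q))
      rwa [Adjunction.homEquiv_unit] at this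
    apply (adj.homEquiv _ _).injective
    rw [Adjunction.homEquiv_naturality_left]
    simp only [Adjunction.homEquiv_naturality_right,
      Equiv.apply_symm_apply, Functor.map_comp, assoc]
    rw [← μ_natural_left_assoc, ← μ_natural_right]
    rw [← tensorHom_id, ← id_tensorHom, tensorHom_comp_tensorHom_assoc, tensorHom_comp_tensorHom_assoc, h, h]
    rw [← tensorHom_comp_tensorHom, ← tensorHom_comp_tensorHom]
    have gassoc : (μ G (F.obj X) (F.obj Y) ⊗ₘ 𝟙 (G.obj (F.obj Z))) ≫
        μ G (F.obj X ⊗ F.obj Y) (F.obj Z) ≫ G.map (α_ (F.obj X) (F.obj Y) (F.obj Z)).hom =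
        (α_ (G.obj (F.obj X)) (G.obj (F.obj Y)) (G.obj (F.obj Z))).hom ≫
          (𝟙 (G.obj (F.obj X)) ⊗ₘ μ G (F.obj Y) (F.obj Z)) ≫ μ G (F.obj X) (F.obj Y ⊗ F.obj Z) := by
      rw [tensorHom_id, id_tensorHom]
      exact Functor.LaxMonoidal.associativity (F := G) _ _ _
    simp only [assoc]
    rw [gassoc]
    simp only [Functor.id_obj, Functor.comp_obj]
    rw [← assoc, associator_naturality, assoc]
  oplax_left_unitality X := by
    have h2 : adj.unit.app (𝟙_ B) ≫ G.map ((adj.homEquiv _ _).symm (ε G)) = ε G := by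
      have := (adj.homEquiv (𝟙_ B) (𝟙_ A)).apply_symm_apply (ε G)
      rwa [Adjunction.homEquiv_unit] at this
    have h : adj.unit.app (𝟙_ B ⊗ X) ≫
        G.map ((adj.homEquiv _ _).symm ((adj.unit.app (𝟙_ B) ⊗ₘ adj.unit.app X) ≫ μ G _ _)) =
        (adj.unit.app (𝟙_ B) ⊗ₘ adj.unit.app X) ≫ μ G (F.obj (𝟙_ B)) (F.obj X) := by
      have := (adj.homEquiv (𝟙_ B ⊗ X) (F.obj (𝟙_ B) ⊗ F.obj X)).apply_symm_apply
        ((adj.unit.app (𝟙_ B) ⊗ₘ adj.unit.app X) ≫ μ G (F.obj (𝟙_ B)) (F.obj X))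
      rwa [Adjunction.homEquiv_unit] at this
    have lu : ε G ▷ G.obj (F.obj X) ≫ μ G (𝟙_ A) (F.obj X) =
        (λ_ (G.obj (F.obj X))).hom ≫ G.map (λ_ (F.obj X)).inv := by
      rw [Functor.LaxMonoidal.left_unitality (F := G), assoc, assoc, ← G.map_comp,
        Iso.hom_inv_id, G.map_id, comp_id]
    apply (adj.homEquiv _ _).injective
    rw [Adjunction.homEquiv_naturality_left]
    simp only [Adjunction.homEquiv_naturality_right, Adjunction.homEquiv_unit,
      Functor.map_comp, assoc, Functor.id_obj, Functor.comp_obj]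
    rw [reassoc_of% h]
    rw [← μ_natural_left, ← assoc (adj.unit.app (𝟙_ B) ⊗ₘ adj.unit.app X),
      ← tensorHom_id, tensorHom_comp_tensorHom, h2]
    simp only [Functor.comp_obj, Functor.id_obj, comp_id]
    rw [tensorHom_def' (ε G) (adj.unit.app X)]
    simp only [Functor.comp_obj, Functor.id_obj, assoc]
    rw [lu, ← leftUnitor_inv_naturality_assoc]
    simp
  oplax_right_unitality X := by
    have h2 : adj.unit.app (𝟙_ B) ≫ G.map ((adj.homEquiv _ _).symm (ε G)) = ε G := by
      have := (adj.homEquiv (𝟙_ B) (𝟙_ A)).apply_symm_apply (ε G)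
      rwa [Adjunction.homEquiv_unit] at this
    have h : adj.unit.app (X ⊗ 𝟙_ B) ≫
        G.map ((adj.homEquiv _ _).symm ((adj.unit.app X ⊗ₘ adj.unit.app (𝟙_ B)) ≫ μ G _ _)) =
        (adj.unit.app X ⊗ₘ adj.unit.app (𝟙_ B)) ≫ μ G (F.obj X) (F.obj (𝟙_ B)) := by
      have := (adj.homEquiv (X ⊗ 𝟙_ B) (F.obj X ⊗ F.obj (𝟙_ B))).apply_symm_apply
        ((adj.unit.app X ⊗ₘ adj.unit.app (𝟙_ B)) ≫ μ G (F.obj X) (F.obj (𝟙_ B)))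
      rwa [Adjunction.homEquiv_unit] at this
    have ru : G.obj (F.obj X) ◁ ε G ≫ μ G (F.obj X) (𝟙_ A) =
        (ρ_ (G.obj (F.obj X))).hom ≫ G.map (ρ_ (F.obj X)).inv := by
      rw [Functor.LaxMonoidal.right_unitality (F := G), assoc, assoc, ← G.map_comp,
        Iso.hom_inv_id, G.map_id, comp_id]
    apply (adj.homEquiv _ _).injective
    rw [Adjunction.homEquiv_naturality_left]
    simp only [Adjunction.homEquiv_naturality_right, Adjunction.homEquiv_unit,
      Functor.map_comp, assoc, Functor.id_obj, Functor.comp_obj]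
    rw [reassoc_of% h]
    rw [← μ_natural_right, ← assoc (adj.unit.app X ⊗ₘ adj.unit.app (𝟙_ B)),
      ← id_tensorHom, tensorHom_comp_tensorHom, h2]
    simp only [Functor.comp_obj, Functor.id_obj, comp_id]
    rw [tensorHom_def (adj.unit.app X) (ε G)]
    simp only [Functor.comp_obj, Functor.id_obj, assoc]
    rw [ru, ← rightUnitor_inv_naturality_assoc]
    simp

lemma oplax_ext {F : B ⥤ A} (O₁ O₂ : F.OplaxMonoidal)
    (h : Functor.OplaxMonoidal.η (self := O₁) F = Functor.OplaxMonoidal.η (self := O₂) F)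
    (hd : ∀ X Y, Functor.OplaxMonoidal.δ (self := O₁) F X Y = Functor.OplaxMonoidal.δ (self := O₂) F X Y) : O₁ = O₂ := by
  cases O₁; cases O₂
  simp only at h hd
  congr
  funext X Y
  exact hd X Y

lemma mate_unit_δ (X Y : B) :
    letI := mateOplax adj
    adj.unit.app (X ⊗ Y) ≫ G.map (Functor.OplaxMonoidal.δ F X Y) =
      (adj.unit.app X ⊗ₘ adj.unit.app Y) ≫ μ G (F.obj X) (F.obj Y) := by
  have := (adj.homEquiv (X ⊗ Y) (F.obj X ⊗ F.obj Y)).apply_symm_apply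
    ((adj.unit.app X ⊗ₘ adj.unit.app Y) ≫ μ G (F.obj X) (F.obj Y))
  rwa [Adjunction.homEquiv_unit] at this

lemma mate_unit_η :
    letI := mateOplax adj
    adj.unit.app (𝟙_ B) ≫ G.map (Functor.OplaxMonoidal.η F) = ε G := by
  have := (adj.homEquiv (𝟙_ B) (𝟙_ A)).apply_symm_apply (ε G)
  rwa [Adjunction.homEquiv_unit] at this

lemma mate_δ_eq (X Y : B) :
    letI := mateOplax adj
    Functor.OplaxMonoidal.δ F X Y =
      F.map ((adj.unit.app X ⊗ₘ adj.unit.app Y) ≫ μ G (F.obj X) (F.obj Y)) ≫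
        adj.counit.app (F.obj X ⊗ F.obj Y) :=
  adj.homEquiv_counit _ _ _

lemma mate_η_eq :
    letI := mateOplax adj
    Functor.OplaxMonoidal.η F = F.map (ε G) ≫ adj.counit.app (𝟙_ A) :=
  adj.homEquiv_counit _ _ _

end DoctrinalAux

/-- Doctrinal adjunction, colax case: if `G` is strong monoidal and `F ⊣ G`, there
is exactly one oplax monoidal structure on `F` making the unit and counit of the
adjunction monoidal, with structure morphisms the mates of those of `G`. -/
theorem doctrinal_adjunction_oplax
    {G : A ⥤ B} [G.Monoidal] {F : B ⥤ A} (adj : F ⊣ G) :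
    ∃ O : F.OplaxMonoidal,
      (OplaxDoctrinalConds adj O ∧
        (letI := O;
          (∀ b b' : B,
            Functor.OplaxMonoidal.δ F b b' =
              F.map ((adj.unit.app b ⊗ₘ adj.unit.app b') ≫
                  Functor.LaxMonoidal.μ G (F.obj b) (F.obj b')) ≫
                adj.counit.app (F.obj b ⊗ F.obj b')) ∧
          Functor.OplaxMonoidal.η F =
            F.map (Functor.LaxMonoidal.ε G) ≫ adj.counit.app (𝟙_ A))) ∧
      ∀ O' : F.OplaxMonoidal, OplaxDoctrinalConds adj O' → O' = O := by
  letI O := DoctrinalAux.mateOplax adj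
  refine ⟨O, ⟨⟨⟨?_, ?_⟩, ⟨?_, ?_⟩⟩, DoctrinalAux.mate_δ_eq adj, DoctrinalAux.mate_η_eq adj⟩, ?_⟩
  · -- unit δ condition
    intro x y
    rw [Functor.OplaxMonoidal.comp_δ, Functor.OplaxMonoidal.id_δ, id_comp,
      ← assoc, DoctrinalAux.mate_unit_δ adj x y, assoc, Functor.Monoidal.μ_δ]
    simp
  · -- unit η condition
    rw [Functor.OplaxMonoidal.comp_η, ← assoc, DoctrinalAux.mate_unit_η adj,
      Functor.Monoidal.ε_η, Functor.OplaxMonoidal.id_η]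
    rfl
  · -- counit δ condition
    intro x y
    rw [Functor.OplaxMonoidal.id_δ, comp_id, Functor.OplaxMonoidal.comp_δ,
      DoctrinalAux.mate_δ_eq adj, assoc, assoc]
    simp only [Functor.comp_obj]
    erw [← adj.counit_naturality (adj.counit.app x ⊗ₘ adj.counit.app y)]
    rw [
      ← F.map_comp_assoc, ← F.map_comp_assoc]
    have inner : (δ G x y ≫ (adj.unit.app (G.obj x) ⊗ₘ adj.unit.app (G.obj y)) ≫
          μ G (F.obj (G.obj x)) (F.obj (G.obj y))) ≫
        G.map (adj.counit.app x ⊗ₘ adj.counit.app y) = 𝟙 _ := by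
      rw [assoc, assoc, ← Functor.LaxMonoidal.μ_natural, tensorHom_comp_tensorHom_assoc,
        adj.right_triangle_components, adj.right_triangle_components, id_tensorHom_id, id_comp]
      exact Functor.Monoidal.δ_μ G x y
    rw [inner, F.map_id, id_comp]
    rfl
  · -- counit η condition
    rw [Functor.OplaxMonoidal.id_η, comp_id, Functor.OplaxMonoidal.comp_η,
      DoctrinalAux.mate_η_eq adj, ← F.map_comp_assoc, Functor.Monoidal.η_ε, F.map_id, id_comp]
  · -- uniqueness
    intro O' hO'
    obtain ⟨⟨hδu, hηu⟩, -⟩ := hO'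
    apply DoctrinalAux.oplax_ext
    · show Functor.OplaxMonoidal.η (self := O') F = (adj.homEquiv (𝟙_ B) (𝟙_ A)).symm (ε G)
      letI := O'
      apply (adj.homEquiv _ _).injective
      rw [Equiv.apply_symm_apply, Adjunction.homEquiv_unit]
      calc adj.unit.app (𝟙_ B) ≫ G.map (Functor.OplaxMonoidal.η F)
          = (adj.unit.app (𝟙_ B) ≫ Functor.OplaxMonoidal.η (F ⋙ G)) ≫ ε G := by
            rw [Functor.OplaxMonoidal.comp_η, assoc, assoc, Functor.Monoidal.η_ε, comp_id]
        _ = Functor.OplaxMonoidal.η (𝟭 B) ≫ ε G := by rw [hηu]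
        _ = ε G := by rw [Functor.OplaxMonoidal.id_η]; simp
    · intro x y
      show Functor.OplaxMonoidal.δ (self := O') F x y =
        (adj.homEquiv (x ⊗ y) (F.obj x ⊗ F.obj y)).symm
          ((adj.unit.app x ⊗ₘ adj.unit.app y) ≫ μ G (F.obj x) (F.obj y))
      letI := O'
      apply (adj.homEquiv _ _).injective
      rw [Equiv.apply_symm_apply, Adjunction.homEquiv_unit]
      calc adj.unit.app (x ⊗ y) ≫ G.map (Functor.OplaxMonoidal.δ F x y)
          = (adj.unit.app (x ⊗ y) ≫ Functor.OplaxMonoidal.δ (F ⋙ G) x y) ≫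
              μ G (F.obj x) (F.obj y) := by
            rw [Functor.OplaxMonoidal.comp_δ, assoc, assoc, Functor.Monoidal.δ_μ, comp_id]
        _ = (Functor.OplaxMonoidal.δ (𝟭 B) x y ≫ (adj.unit.app x ⊗ₘ adj.unit.app y)) ≫
              μ G (F.obj x) (F.obj y) := by rw [hδu x y]
        _ = (adj.unit.app x ⊗ₘ adj.unit.app y) ≫ μ G (F.obj x) (F.obj y) := by
            rw [Functor.OplaxMonoidal.id_δ]; simp
end

section
/- Let 𝔽 denote the full subcategory of the arrow category of Cat (the category of small categories) spanned by those functors between small categories that are injective on objects and fully faithful. Then 𝔽 has all limits and all colimits of shapes indexed by small categories, and 𝔽 is cartesian closed. -/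
open CategoryTheory CategoryTheory.Limits

universe u

/-- An object of the arrow category of `Cat` is in `𝔽` if the corresponding
functor is injective on objects and fully faithful. -/
def FProp (F : Arrow Cat.{u, u}) : Prop :=
  Function.Injective F.hom.toFunctor.obj ∧ F.hom.toFunctor.Full ∧ F.hom.toFunctor.Faithful

/-- The category `𝔽`: the full subcategory of the arrow category of `Cat` spanned
by the functors which are injective on objects and fully faithful. -/
abbrev FCat : Type (u + 1) := ObjectProperty.FullSubcategory FProp.{u}


-- ### Auxiliary development ###

open CategoryTheory CategoryTheory.Limits



namespace CatColim

variable {J : Type u} [SmallCategory J] (F : J ⥤ Cat.{u, u})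

/-- relation on vertices -/
def rObj (p q : Σ j : J, F.obj j) : Prop :=
  ∃ φ : p.1 ⟶ q.1, (F.map φ).toFunctor.obj p.2 = q.2

def V : Type u := Quot (rObj F)

def vert (j : J) (x : F.obj j) : V F := Quot.mk _ ⟨j, x⟩

lemma vert_eq {j k : J} (φ : j ⟶ k) (x : F.obj j) :
    vert F k ((F.map φ).toFunctor.obj x) = vert F j x :=
  (Quot.sound ⟨φ, rfl⟩).symm

/-- edges -/
structure PreHom (ξ η : V F) where
  j : J
  x : F.obj j
  y : F.obj j
  f : x ⟶ y
  hx : vert F j x = ξ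
  hy : vert F j y = η

def rHom (ξ η : V F) (e e' : PreHom F ξ η) : Prop :=
  ∃ (φ : e.j ⟶ e'.j) (hx : (F.map φ).toFunctor.obj e.x = e'.x) (hy : (F.map φ).toFunctor.obj e.y = e'.y),
    e'.f = eqToHom hx.symm ≫ (F.map φ).toFunctor.map e.f ≫ eqToHom hy

instance : Quiver (V F) := ⟨fun ξ η => Quot (rHom F ξ η)⟩

/-- the categorical relations -/
inductive relCat : HomRel (Paths (V F))
  | id (j : J) (x : F.obj j) :
      @relCat (vert F j x) (vert F j x)
        (Quiver.Hom.toPath (Quot.mk _ ⟨j, x, x, 𝟙 x, rfl, rfl⟩)) (𝟙 _)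
  | comp (j : J) (x y z : F.obj j) (f : x ⟶ y) (g : y ⟶ z) :
      @relCat (vert F j x) (vert F j z)
        (Quiver.Hom.toPath (Quot.mk _ ⟨j, x, z, f ≫ g, rfl, rfl⟩))
        (Quiver.Hom.toPath (Quot.mk _ ⟨j, x, y, f, rfl, rfl⟩) ≫
         Quiver.Hom.toPath (Quot.mk _ ⟨j, y, z, g, rfl, rfl⟩))

abbrev C : Cat.{u, u} := Cat.of (Quotient (relCat F))

def cobj (j : J) (x : F.obj j) : C F := ⟨vert F j x⟩

def cmap' {ξ η : V F} (e : PreHom F ξ η) : (⟨ξ⟩ : C F) ⟶ ⟨η⟩ :=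
  (Quotient.functor (relCat F)).map (Quiver.Hom.toPath (Quot.mk _ e))

def cmap {j : J} {x y : F.obj j} (f : x ⟶ y) : cobj F j x ⟶ cobj F j y :=
  cmap' F ⟨j, x, y, f, rfl, rfl⟩

lemma cobj_eq {j k : J} (φ : j ⟶ k) (x : F.obj j) :
    cobj F k ((F.map φ).toFunctor.obj x) = cobj F j x := by
  show (⟨_⟩ : C F) = ⟨_⟩
  rw [vert_eq F φ x]

lemma cmap'_sound {ξ η : V F} {e e' : PreHom F ξ η} (h : rHom F ξ η e e') :
    cmap' F e = cmap' F e' := by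
  unfold cmap'
  congr 1
  exact congrArg _ (Quot.sound h)

/-- transporting along endpoint equalities -/
lemma cmap'_cast {ξ η ξ' η' : V F} (hξ : ξ = ξ') (hη : η = η') (e : PreHom F ξ η) :
    cmap' F e = eqToHom (by rw [hξ]) ≫
      cmap' F ⟨e.j, e.x, e.y, e.f, e.hx.trans hξ, e.hy.trans hη⟩ ≫ eqToHom (by rw [hη]) := by
  subst hξ; subst hη; simp [cmap']

lemma cmap_natural {j k : J} (φ : j ⟶ k) {x y : F.obj j} (f : x ⟶ y) :
    cmap F ((F.map φ).toFunctor.map f) =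
      eqToHom (cobj_eq F φ x) ≫ cmap F f ≫ eqToHom (cobj_eq F φ y).symm := by
  have h1 : cmap F ((F.map φ).toFunctor.map f) =
      eqToHom (cobj_eq F φ x) ≫
        cmap' F ⟨k, (F.map φ).toFunctor.obj x, (F.map φ).toFunctor.obj y, (F.map φ).toFunctor.map f,
          (vert_eq F φ x), (vert_eq F φ y)⟩ ≫ eqToHom (cobj_eq F φ y).symm := by
    have := cmap'_cast F (ξ := vert F k ((F.map φ).toFunctor.obj x)) (η := vert F k ((F.map φ).toFunctor.obj y))
      (vert_eq F φ x) (vert_eq F φ y) ⟨k, _, _, (F.map φ).toFunctor.map f, rfl, rfl⟩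
    simp [cmap] at this; exact this
  rw [h1]
  congr 1
  congr 1
  · exact (cmap'_sound F (e := ⟨j, x, y, f, rfl, rfl⟩) ⟨φ, rfl, rfl, by simp⟩).symm

/-- the cocone functors -/
def ι (j : J) : (F.obj j : Type u) ⥤ C F where
  obj x := cobj F j x
  map f := cmap F f
  map_id x := CategoryTheory.Quotient.sound _ (relCat.id j x)
  map_comp {x y z} f g := by
    have := CategoryTheory.Quotient.sound (relCat F) (relCat.comp j x y z f g)
    exact this

lemma ι_natural {j k : J} (φ : j ⟶ k) : (F.map φ).toFunctor ⋙ ι F k = ι F j := by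
  exact CategoryTheory.Functor.ext (fun x => cobj_eq F φ x) (fun x y f => cmap_natural F φ f)


section Desc

variable (s : Cocone F)

def descObj : V F → s.pt :=
  Quot.lift (fun p => (s.ι.app p.1).toFunctor.obj p.2) (by
    rintro ⟨j, x⟩ ⟨k, y⟩ ⟨φ, h⟩
    have := Functor.congr_obj (congrArg Cat.Hom.toFunctor (s.w φ)) x
    dsimp at this h ⊢
    rw [← h, ← this])

@[simp] lemma descObj_vert (j : J) (x : F.obj j) :
    descObj F s (vert F j x) = (s.ι.app j).toFunctor.obj x := rfl

def descMapPre {ξ η : V F} (pre : PreHom F ξ η) : descObj F s ξ ⟶ descObj F s η :=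
  eqToHom (show descObj F s ξ = (s.ι.app pre.j).toFunctor.obj pre.x from
      (congrArg (descObj F s) pre.hx).symm) ≫ (s.ι.app pre.j).toFunctor.map pre.f ≫
    eqToHom (show (s.ι.app pre.j).toFunctor.obj pre.y = descObj F s η from
      congrArg (descObj F s) pre.hy)

lemma descMapPre_sound {ξ η : V F} (pre pre' : PreHom F ξ η) (h : rHom F ξ η pre pre') :
    descMapPre F s pre = descMapPre F s pre' := by
  obtain ⟨φ, hx, hy, hg⟩ := h
  have hw := Functor.congr_hom (congrArg Cat.Hom.toFunctor (s.w φ)) pre.f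
  dsimp at hw
  unfold descMapPre
  rw [hg]
  simp only [Functor.map_comp, eqToHom_map]
  rw [hw]
  simp

def descPre : V F ⥤q (s.pt : Type u) where
  obj := descObj F s
  map {ξ η} := Quot.lift (descMapPre F s) (descMapPre_sound F s)

def descFun : C F ⟶ s.pt :=
  (CategoryTheory.Quotient.lift (relCat F) (Paths.lift (descPre F s)) (by
    rintro a b f₁ f₂ (⟨j, x⟩ | ⟨j, x, y, z, f, g⟩)
    · simp [descPre, descMapPre]
      rfl
    · erw [Functor.map_comp, Paths.lift_toPath, Paths.lift_toPath]
      simp [descPre, descMapPre]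
      show 𝟙 _ ≫ _ ≫ _ = (𝟙 _ ≫ _) ≫ 𝟙 _ ≫ _
      erw [Category.id_comp, Category.id_comp, Category.id_comp]
      rfl)).toCatHom

lemma descFun_cmap {j : J} {x y : F.obj j} (f : x ⟶ y) :
    (descFun F s).toFunctor.map (cmap F f) = (s.ι.app j).toFunctor.map f := by
  show (Paths.lift (descPre F s)).map (Quiver.Hom.toPath _) = _
  erw [Paths.lift_toPath]
  simp [descPre, descMapPre]
  exact Category.id_comp _

abbrev cocone : Cocone F where
  pt := C F
  ι := { app := fun j => (ι F j).toCatHom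
         naturality := fun j k φ => by
           exact Cat.Hom.ext (ι_natural F φ) }

def isColimit : IsColimit (cocone F) where
  desc s := descFun F s
  fac s j := by
    refine Cat.Hom.ext (CategoryTheory.Functor.ext (F := ((cocone F).ι.app j ≫ descFun F s).toFunctor)
      (G := (s.ι.app j).toFunctor) (fun x => rfl) ?_)
    intro x y f
    erw [eqToHom_refl, eqToHom_refl, Category.comp_id, Category.id_comp]
    exact descFun_cmap F s f
  uniq s m hm := by
    have : Quotient.functor (relCat F) ⋙ m.toFunctor = Paths.lift (descPre F s) := by
      apply Paths.ext_functor
      case h_obj =>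
        funext ξ
        obtain ⟨j, x⟩ := ξ
        exact Functor.congr_obj (congrArg Cat.Hom.toFunctor (hm j)) x
      case h =>
        rintro a b e
        obtain ⟨j, x, y, f, hx, hy⟩ := e
        subst hx; subst hy
        have hc := Functor.congr_hom (congrArg Cat.Hom.toFunctor (hm j)) f
        have h2 : (Quotient.functor (relCat F) ⋙ m.toFunctor).map
            (Quiver.Hom.toPath (Quot.mk _ ⟨j, x, y, f, rfl, rfl⟩))
            = ((cocone F).ι.app j ≫ m).toFunctor.map f := rfl
        rw [h2, hc]
        simp [descPre, descMapPre]
        erw [Category.assoc, eqToHom_trans_assoc]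
        rfl
    exact Cat.Hom.ext (CategoryTheory.Quotient.lift_unique' (relCat F) _ (descFun F s).toFunctor
      (this.trans (by
        simp only [descFun, Functor.toCatHom_toFunctor]
        exact (CategoryTheory.Quotient.lift_spec _ _ _).symm)))

end Desc

end CatColim

instance : HasColimitsOfSize.{u, u} Cat.{u, u} where
  has_colimits_of_shape _ :=
    { has_colimit := fun F => HasColimit.mk ⟨CatColim.cocone F, CatColim.isColimit F⟩ }

open CategoryTheory CategoryTheory.Limits

noncomputable section

namespace MCatNS

structure MCat : Type (u + 1) where
  C : Cat.{u, u}
  S : Set C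

instance : Category.{u} MCat where
  Hom X Y := { H : X.C ⟶ Y.C // ∀ x ∈ X.S, H.toFunctor.obj x ∈ Y.S }
  id X := ⟨𝟙 X.C, fun _ hx => hx⟩
  comp f g := ⟨f.val ≫ g.val, fun x hx => g.2 _ (f.2 x hx)⟩
  id_comp f := Subtype.ext rfl
  comp_id f := Subtype.ext rfl
  assoc f g h := Subtype.ext rfl

@[simp] lemma mcomp_val {X Y Z : MCat} (f : X ⟶ Y) (g : Y ⟶ Z) :
    (f ≫ g).val = f.val ≫ g.val := rfl
@[simp] lemma mid_val (X : MCat) : (𝟙 X : X ⟶ X).val = 𝟙 X.C := rfl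

def forgetM : MCat ⥤ Cat.{u, u} where
  obj := MCat.C
  map := Subtype.val

section Lims

variable {J : Type u} [SmallCategory J] (D : J ⥤ MCat)

def mlimCone : Cone D where
  pt := ⟨limit (D ⋙ forgetM), { x | ∀ j, (limit.π (D ⋙ forgetM) j).toFunctor.obj x ∈ (D.obj j).S }⟩
  π :=
    { app := fun j => ⟨limit.π (D ⋙ forgetM) j, fun _ hx => hx j⟩
      naturality := fun j k φ => by
        apply Subtype.ext
        have := limit.w (D ⋙ forgetM) φ
        dsimp
        exact (Category.id_comp _).trans this.symm }

def mlimIsLimit : IsLimit (mlimCone D) where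
  lift s := ⟨limit.lift (D ⋙ forgetM) (forgetM.mapCone s), by
    intro x hx j
    have := Functor.congr_obj (congrArg Cat.Hom.toFunctor (limit.lift_π (forgetM.mapCone s) j)) x
    dsimp at this
    refine (congrArg (· ∈ (D.obj j).S) this).mpr ?_
    exact (s.π.app j).2 x hx⟩
  fac s j := Subtype.ext (limit.lift_π (forgetM.mapCone s) j)
  uniq s m hm := by
    apply Subtype.ext
    apply limit.hom_ext
    intro j
    erw [limit.lift_π]
    exact congrArg Subtype.val (hm j)

def mcolimCocone : Cocone D where
  pt := ⟨colimit (D ⋙ forgetM), ⋃ j, (colimit.ι (D ⋙ forgetM) j).toFunctor.obj '' (D.obj j).S⟩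
  ι :=
    { app := fun j => ⟨colimit.ι (D ⋙ forgetM) j,
        fun x hx => Set.mem_iUnion.2 ⟨j, ⟨x, hx, rfl⟩⟩⟩
      naturality := fun j k φ => by
        apply Subtype.ext
        have := colimit.w (D ⋙ forgetM) φ
        dsimp
        exact this.trans (Category.comp_id _).symm }

def mcolimIsColimit : IsColimit (mcolimCocone D) where
  desc s := ⟨colimit.desc (D ⋙ forgetM) (forgetM.mapCocone s), by
    intro x hx
    obtain ⟨j, y, hy, rfl⟩ := Set.mem_iUnion.1
      (show x ∈ ⋃ j, (colimit.ι (D ⋙ forgetM) j).toFunctor.obj '' (D.obj j).S from hx)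
    have := Functor.congr_obj (congrArg Cat.Hom.toFunctor (colimit.ι_desc (forgetM.mapCocone s) j)) y
    dsimp at this
    refine (congrArg (· ∈ s.pt.S) this).mpr ?_
    exact (s.ι.app j).2 y hy⟩
  fac s j := Subtype.ext (colimit.ι_desc (forgetM.mapCocone s) j)
  uniq s m hm := by
    apply Subtype.ext
    apply colimit.hom_ext
    intro j
    erw [colimit.ι_desc]
    exact congrArg Subtype.val (hm j)

end Lims

instance : HasLimitsOfSize.{u, u} MCat.{u} where
  has_limits_of_shape _ :=
    { has_limit := fun D => HasLimit.mk ⟨mlimCone D, mlimIsLimit D⟩ }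

instance : HasColimitsOfSize.{u, u} MCat.{u} where
  has_colimits_of_shape _ :=
    { has_colimit := fun D => HasColimit.mk ⟨mcolimCocone D, mcolimIsColimit D⟩ }

def mterminal : MCat.{u} := ⟨Cat.chosenTerminal, Set.univ⟩

def mterminalIsTerminal : IsTerminal mterminal.{u} :=
  IsTerminal.ofUniqueHom (fun X => ⟨Cat.chosenTerminalIsTerminal.from X.C, fun _ _ => trivial⟩)
    (fun X m => Subtype.ext (Cat.chosenTerminalIsTerminal.hom_ext _ _))

def mprodCone (X Y : MCat.{u}) : BinaryFan X Y :=
  BinaryFan.mk (P := ⟨Cat.of (X.C × Y.C), X.S ×ˢ Y.S⟩)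
    (⟨(CategoryTheory.Prod.fst X.C Y.C).toCatHom, fun _ hx => hx.1⟩ : (⟨Cat.of (X.C × Y.C), X.S ×ˢ Y.S⟩ : MCat) ⟶ X)
    ⟨(CategoryTheory.Prod.snd X.C Y.C).toCatHom, fun _ hx => hx.2⟩

def mprodIsLimit (X Y : MCat.{u}) : IsLimit (mprodCone X Y) :=
  BinaryFan.isLimitMk
    (fun s => ⟨(Functor.prod' s.fst.val.toFunctor s.snd.val.toFunctor).toCatHom,
      fun x hx => ⟨s.fst.2 x hx, s.snd.2 x hx⟩⟩)
    (fun s => Subtype.ext rfl)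
    (fun s => Subtype.ext rfl)
    (fun s m h1 h2 => by
      apply Subtype.ext
      have h1' := congrArg Subtype.val h1
      have h2' := congrArg Subtype.val h2
      exact Cat.Hom.ext (Functor.hext
        (fun x => Prod.ext (by simp [← h1']; rfl) (by simp [← h2']; rfl))
        (fun x y f => by
          dsimp
          rw [← h1', ← h2']
          rfl)))

instance mChosen : CartesianMonoidalCategory MCat.{u} :=
  .ofChosenFiniteProducts { cone := asEmptyCone mterminal, isLimit := mterminalIsTerminal }
    fun X Y => { cone := mprodCone X Y, isLimit := mprodIsLimit X Y }

end MCatNS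

end
noncomputable section
namespace MCatNS
open MonoidalCategory

variable (X : MCat.{u})

def EXP : MCat.{u} ⥤ MCat.{u} where
  obj Z := ⟨Cat.of (X.C ⥤ Z.C), { K | ∀ b ∈ X.S, K.obj b ∈ Z.S }⟩
  map {Z W} H := ⟨((Functor.whiskeringRight X.C Z.C W.C).obj H.val.toFunctor).toCatHom,
    fun K hK b hb => H.2 _ (hK b hb)⟩
  map_id Z := rfl
  map_comp f g := rfl

def mhomEquiv (Y Z : MCat.{u}) : (X ⊗ Y ⟶ Z) ≃ (Y ⟶ (EXP X).obj Z) where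
  toFun G := ⟨(Functor.curry.obj G.val.toFunctor).flip.toCatHom,
    fun y hy b hb => G.2 (b, y) ⟨hb, hy⟩⟩
  invFun H := ⟨(Functor.uncurry.obj H.val.toFunctor.flip).toCatHom,
    fun p hp => H.2 p.2 hp.2 p.1 hp.1⟩
  left_inv G := by
    apply Subtype.ext
    apply Cat.Hom.ext
    show Functor.uncurry.obj (Functor.curry.obj G.val.toFunctor) = G.val.toFunctor
    exact Functor.uncurry_obj_curry_obj G.val.toFunctor
  right_inv H := by
    apply Subtype.ext
    apply Cat.Hom.ext
    show (Functor.curry.obj (Functor.uncurry.obj H.val.toFunctor.flip)).flip = H.val.toFunctor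
    rw [Functor.curry_obj_uncurry_obj]
    rfl

def madj : tensorLeft X ⊣ EXP X :=
  Adjunction.mkOfHomEquiv
    { homEquiv := mhomEquiv X
      homEquiv_naturality_left_symm := fun f g => Subtype.ext (by
        rfl)
      homEquiv_naturality_right := fun f g => Subtype.ext (by
        rfl) }

instance : MonoidalClosed MCat.{u} where
  closed X := { rightAdj := EXP X, adj := madj X }

end MCatNS
end


noncomputable section

namespace MCatNS

lemma fullsub_eqToHom {C : Type u} [Category.{u} C] {Z : C → Prop}
    {p q : ObjectProperty.FullSubcategory Z} (h : p = q) :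
    (ObjectProperty.ι Z).map (eqToHom h) = eqToHom (congrArg _ h) := by
  cases h; rfl

lemma fullsub_comp {C : Type u} [Category.{u} C] {Z : C → Prop}
    {p q r : ObjectProperty.FullSubcategory Z} (f : p ⟶ q) (g : q ⟶ r) :
    (f ≫ g).hom = (ObjectProperty.ι Z).map f ≫ (ObjectProperty.ι Z).map g := rfl

lemma fullsub_id {C : Type u} [Category.{u} C] {Z : C → Prop}
    (p : ObjectProperty.FullSubcategory Z) : (𝟙 p : p ⟶ p).hom = 𝟙 p.obj := rfl

lemma fullsub_hom {C : Type u} [Category.{u} C] {Z : C → Prop}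
    {p q : ObjectProperty.FullSubcategory Z} (f : p ⟶ q) :
    (ObjectProperty.ι Z).map f = f.hom := rfl

lemma fullsub_eqToHom_hom {C : Type u} [Category.{u} C] {Z : C → Prop}
    {p q : ObjectProperty.FullSubcategory Z} (h : p = q) :
    (eqToHom h).hom = eqToHom (congrArg _ h) := by
  cases h; rfl

lemma eqToHom_sandwich {C : Type u} [Category.{u} C] {X Y X' Y' : C} (g : X ⟶ Y)
    (a : X = X') (c : X' = X) (d : Y = Y') (b : Y' = Y) :
    g = eqToHom a ≫ (eqToHom c ≫ g ≫ eqToHom d) ≫ eqToHom b := by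
  subst a d; simp

def inclM (M : MCat.{u}) : Cat.of (ObjectProperty.FullSubcategory (· ∈ M.S)) ⟶ M.C :=
  (ObjectProperty.ι (· ∈ M.S)).toCatHom

def Phi : MCat.{u} ⥤ FCat.{u} where
  obj M := ⟨Arrow.mk (inclM M),
    fun p q h => by
      apply ObjectProperty.FullSubcategory.ext
      exact h,
    inferInstanceAs (ObjectProperty.ι _).Full,
    inferInstanceAs (ObjectProperty.ι _).Faithful⟩
  map {M N} H := ⟨
    { left := (ObjectProperty.lift (· ∈ N.S) ((inclM M).toFunctor ⋙ H.val.toFunctor)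
        (fun p => H.2 p.obj p.property)).toCatHom
      right := H.val
      w := rfl }⟩
  map_id M := rfl
  map_comp f g := rfl

instance : Phi.{u}.Faithful where
  map_injective {M N f g} h := by
    apply Subtype.ext
    exact congrArg (fun φ => φ.hom.right) h

instance : Phi.{u}.Full where
  map_surjective {M N} ψ := by
    refine ⟨⟨ψ.hom.right, fun x hx => ?_⟩, ?_⟩
    · have := Functor.congr_obj (congrArg Cat.Hom.toFunctor ψ.hom.w) ⟨x, hx⟩
      dsimp [Phi, inclM] at this
      refine (congrArg (· ∈ N.S) this).mp ?_
      exact (ψ.hom.left.toFunctor.obj ⟨x, hx⟩).property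
    · apply InducedCategory.hom_ext
      apply Arrow.hom_ext
      · -- left components
        apply Cat.Hom.ext
        apply CategoryTheory.Functor.ext
        case h_obj =>
          intro p
          apply ObjectProperty.FullSubcategory.ext
          exact (Functor.congr_obj (congrArg Cat.Hom.toFunctor ψ.hom.w) p).symm
        case h_map =>
          intro p q f
          have hw := Functor.congr_hom (congrArg Cat.Hom.toFunctor ψ.hom.w) f
          dsimp [Phi, inclM] at hw
          apply ObjectProperty.hom_ext
          show ψ.hom.right.toFunctor.map f.hom = _
          erw [ObjectProperty.FullSubcategory.comp_hom, ObjectProperty.FullSubcategory.comp_hom,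
            fullsub_eqToHom_hom, fullsub_eqToHom_hom]
          rw [show (ψ.hom.left.toFunctor.map f).hom = _ from hw]
          exact eqToHom_sandwich _ _ _ _ _
      · rfl

section EssSurj

variable (X : FCat.{u})

private def Fh := X.obj.hom

variable (hinj : Function.Injective (Fh X).toFunctor.obj) [(Fh X).toFunctor.Full] [(Fh X).toFunctor.Faithful]

abbrev MX : MCat.{u} := ⟨X.obj.right, Set.range (Fh X).toFunctor.obj⟩

def Theta : (X.obj.left : Type u) ⥤ ObjectProperty.FullSubcategory (· ∈ (MX X).S) where
  obj a := ⟨(Fh X).toFunctor.obj a, ⟨a, rfl⟩⟩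
  map f := ⟨(Fh X).toFunctor.map f⟩
  map_id a := InducedCategory.hom_ext ((Fh X).toFunctor.map_id a)
  map_comp f g := InducedCategory.hom_ext ((Fh X).toFunctor.map_comp f g)

def Psi : ObjectProperty.FullSubcategory (· ∈ (MX X).S) ⥤ (X.obj.left : Type u) where
  obj p := p.property.choose
  map {p q} f :=
    (Fh X).toFunctor.preimage (eqToHom p.property.choose_spec ≫ f.hom ≫ eqToHom q.property.choose_spec.symm)
  map_id p := by
    apply (Fh X).toFunctor.map_injective
    simp [fullsub_id]
  map_comp {p q r} f g := by
    apply (Fh X).toFunctor.map_injective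
    simp [fullsub_comp (Z := (· ∈ (MX X).S)) f g]

def homX : Phi.obj (MX X) ⟶ X := ⟨{
  left := (Psi X).toCatHom
  right := 𝟙 _
  w := by
    refine Cat.Hom.ext (CategoryTheory.Functor.ext (fun p => p.property.choose_spec) ?_)
    intro p q f
    show (Fh X).toFunctor.map ((Psi X).map f) = _
    dsimp only [Psi]
    rw [Functor.map_preimage]
    rfl }⟩

def invX : X ⟶ Phi.obj (MX X) := ⟨{
  left := (Theta X).toCatHom
  right := 𝟙 _
  w := Cat.Hom.ext rfl }⟩

lemma hom_inv : homX X ≫ invX X = 𝟙 (Phi.obj (MX X)) := by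
  apply InducedCategory.hom_ext
  apply Arrow.hom_ext
  · apply Cat.Hom.ext
    show Psi X ⋙ Theta X = 𝟭 _
    refine CategoryTheory.Functor.ext (fun p => ObjectProperty.FullSubcategory.ext p.property.choose_spec) ?_
    intro p q f
    apply ObjectProperty.hom_ext
    show (Fh X).toFunctor.map ((Psi X).map f) = _
    dsimp only [Psi]
    rw [Functor.map_preimage]
    erw [ObjectProperty.FullSubcategory.comp_hom, ObjectProperty.FullSubcategory.comp_hom,
      fullsub_eqToHom_hom, fullsub_eqToHom_hom]
    rfl
  · show 𝟙 _ ≫ 𝟙 _ = _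
    simp

lemma inv_hom (hinj : Function.Injective (Fh X).toFunctor.obj) :
    invX X ≫ homX X = 𝟙 X := by
  apply InducedCategory.hom_ext
  apply Arrow.hom_ext
  · apply Cat.Hom.ext
    show Theta X ⋙ Psi X = 𝟭 _
    refine CategoryTheory.Functor.ext
      (fun a => hinj (((Theta X).obj a).property.choose_spec)) ?_
    intro a b f
    apply (Fh X).toFunctor.map_injective
    show (Fh X).toFunctor.map ((Psi X).map ((Theta X).map f)) = _
    dsimp only [Psi, Theta]
    rw [Functor.map_preimage]
    simp [eqToHom_map]
    erw [eqToHom_map, eqToHom_map]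
  · show 𝟙 _ ≫ 𝟙 _ = _
    simp

end EssSurj

instance : Phi.{u}.EssSurj where
  mem_essImage X := by
    letI : (Fh X).toFunctor.Full := X.property.2.1
    letI : (Fh X).toFunctor.Faithful := X.property.2.2
    exact ⟨MX X, ⟨⟨homX X, invX X, hom_inv X, inv_hom X X.property.1⟩⟩⟩

instance : Phi.{u}.IsEquivalence where

end MCatNS

end


/-- `𝔽` has all small limits and colimits and is cartesian closed. -/
theorem FCat_hasLimits_hasColimits_cartesianClosed :
    HasLimitsOfSize.{u, u} FCat.{u} ∧
    HasColimitsOfSize.{u, u} FCat.{u} ∧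
    ∃ P : CartesianMonoidalCategory FCat.{u},
      Nonempty (@MonoidalClosed FCat.{u} _ P.toMonoidalCategory) := by
  have e : MCatNS.MCat.{u} ≌ FCat.{u} := MCatNS.Phi.{u}.asEquivalence
  haveI : e.inverse.IsEquivalence := inferInstance
  haveI hl : HasLimitsOfSize.{u, u} FCat.{u} :=
    Adjunction.has_limits_of_equivalence e.inverse
  haveI hc : HasColimitsOfSize.{u, u} FCat.{u} :=
    Adjunction.has_colimits_of_equivalence e.inverse
  haveI : HasProducts.{u} FCat.{u} := fun _ => inferInstance
  haveI : HasFiniteProducts FCat.{u} := hasFiniteProducts_of_hasProducts.{u} _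
  letI P : CartesianMonoidalCategory FCat.{u} := CartesianMonoidalCategory.ofHasFiniteProducts
  exact ⟨hl, hc, P, ⟨cartesianClosedOfEquiv e⟩⟩
end
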